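/- arXiv:1802.00091 — 7 statements merged into one kernel-verified Lean document; each statement's English description precedes it below -/
import Mathlib

section
/- A number λ ∈ ℂ is an eigenvalue (i.e., there exists a nonzero solution of b₀y'' + b₁y' = λy satisfying the jump boundary conditions) if and only if Δ(λ) = 0. -/
open MeasureTheory Set

noncomputable section

/-- `(l - lam) y = f` on `(0,1)`: `y` has derivative `y'`, `y'` has an integrable
derivative `g` (absolute continuity), and `b₀ g + b₁ y' - lam y = f` a.e. on `(0,1)`. -/
def IsSolAux (b₀ b₁ : ℝ → ℝ) (lam : ℂ) (f : ℝ → ℂ) (y y' : ℝ → ℂ) : Prop :=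
  ∃ g : ℝ → ℂ, IntegrableOn g (Ioo 0 1) volume ∧
    (∀ x ∈ Icc (0:ℝ) 1, y x = y 0 + ∫ t in (0:ℝ)..x, y' t) ∧
    (∀ x ∈ Icc (0:ℝ) 1, y' x = y' 0 + ∫ t in (0:ℝ)..x, g t) ∧
    (∀ᵐ x ∂(volume.restrict (Ioo (0:ℝ) 1)),
      (b₀ x : ℂ) * g x + (b₁ x : ℂ) * y' x - lam * y x = f x)

/-- `y` (with derivative `y'`) is a solution of `b₀ y'' + b₁ y' = lam y` on `[0,1]`. -/
def IsSol (b₀ b₁ : ℝ → ℝ) (lam : ℂ) (y y' : ℝ → ℂ) : Prop :=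
  IsSolAux b₀ b₁ lam 0 y y'

/-- The standing assumptions on the coefficients `b₀`, `b₁`. -/
def CoeffOK (b₀ b₁ : ℝ → ℝ) : Prop :=
  Measurable b₀ ∧ Measurable b₁ ∧
    (∀ᵐ x ∂(volume.restrict (Ioo (0:ℝ) 1)), b₀ x < 0) ∧
    IntegrableOn (fun x => 1 / b₀ x) (Ioo 0 1) volume ∧
    IntegrableOn (fun x => b₁ x / b₀ x) (Ioo 0 1) volume


-- integrability upgrade
lemma int_Icc {E : Type*} [NormedAddCommGroup E] {f : ℝ → E}
    (hf : IntegrableOn f (Ioo 0 1) volume) : IntegrableOn f (Icc 0 1) volume :=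
  (integrableOn_Icc_iff_integrableOn_Ioo).2 hf

lemma primitive_contOn {E : Type*} [NormedAddCommGroup E] [NormedSpace ℝ E] {f : ℝ → E}
    (hf : IntegrableOn f (Icc 0 1) volume) :
    ContinuousOn (fun x => ∫ t in (0:ℝ)..x, f t) (Icc 0 1) := by
  have := intervalIntegral.continuousOn_primitive_interval (a := (0:ℝ)) (b := 1) (μ := volume)
    (f := f) (by rwa [uIcc_of_le zero_le_one])
  rwa [uIcc_of_le zero_le_one] at this

lemma sol_cont {y y' g : ℝ → ℂ}
    (hg : IntegrableOn g (Ioo 0 1) volume)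
    (hy : ∀ x ∈ Icc (0:ℝ) 1, y x = y 0 + ∫ t in (0:ℝ)..x, y' t)
    (hy' : ∀ x ∈ Icc (0:ℝ) 1, y' x = y' 0 + ∫ t in (0:ℝ)..x, g t) :
    ContinuousOn y (Icc 0 1) ∧ ContinuousOn y' (Icc 0 1) := by
  have hc' : ContinuousOn y' (Icc 0 1) := by
    have := (continuousOn_const (c := y' 0)).add (primitive_contOn (int_Icc hg))
    exact this.congr hy'
  have hint : IntegrableOn y' (Icc 0 1) volume := hc'.integrableOn_Icc
  have hc : ContinuousOn y (Icc 0 1) := by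
    have := (continuousOn_const (c := y 0)).add (primitive_contOn hint)
    exact this.congr hy
  exact ⟨hc, hc'⟩

lemma ii_of_Icc {E : Type*} [NormedAddCommGroup E] {f : ℝ → E} {x : ℝ}
    (hf : IntegrableOn f (Icc 0 1) volume) (hx : x ∈ Icc (0:ℝ) 1) :
    IntervalIntegrable f volume 0 x := by
  apply IntegrableOn.intervalIntegrable
  apply hf.mono_set
  rw [uIcc_of_le hx.1]
  exact Icc_subset_Icc le_rfl hx.2

lemma sol_lin {b₀ b₁ : ℝ → ℝ} {lam : ℂ} {y y' z z' : ℝ → ℂ} (c d : ℂ)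
    (hy : IsSol b₀ b₁ lam y y') (hz : IsSol b₀ b₁ lam z z') :
    IsSol b₀ b₁ lam (fun x => c * y x + d * z x) (fun x => c * y' x + d * z' x) := by
  obtain ⟨gy, hgy, hy1, hy2, hy3⟩ := hy
  obtain ⟨gz, hgz, hz1, hz2, hz3⟩ := hz
  have hcy := sol_cont hgy hy1 hy2
  have hcz := sol_cont hgz hz1 hz2
  refine ⟨fun x => c * gy x + d * gz x, ?_, ?_, ?_, ?_⟩
  · exact ((hgy.const_mul c).add (hgz.const_mul d))
  · intro x hx
    rw [intervalIntegral.integral_add (((ii_of_Icc hcy.2.integrableOn_Icc hx).const_mul c))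
      (((ii_of_Icc hcz.2.integrableOn_Icc hx).const_mul d)),
      intervalIntegral.integral_const_mul, intervalIntegral.integral_const_mul,
      ]
    simp only []
    rw [hy1 x hx, hz1 x hx]; ring
  · intro x hx
    rw [intervalIntegral.integral_add (((ii_of_Icc (int_Icc hgy) hx).const_mul c))
      (((ii_of_Icc (int_Icc hgz) hx).const_mul d)),
      intervalIntegral.integral_const_mul, intervalIntegral.integral_const_mul,
      ]
    simp only []
    rw [hy2 x hx, hz2 x hx]; ring
  · filter_upwards [hy3, hz3] with x h1 h2
    simp only [Pi.zero_apply] at h1 h2 ⊢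
    have : (b₀ x : ℂ) * (c * gy x + d * gz x) + (b₁ x) * (c * y' x + d * z' x)
        - lam * (c * y x + d * z x)
        = c * ((b₀ x) * gy x + (b₁ x) * y' x - lam * y x)
          + d * ((b₀ x) * gz x + (b₁ x) * z' x - lam * z x) := by ring
    rw [this, h1, h2]; ring

lemma sol_unique {b₀ b₁ : ℝ → ℝ} {lam : ℂ} {y y' : ℝ → ℂ} (hco : CoeffOK b₀ b₁)
    (hsol : IsSol b₀ b₁ lam y y') (h00 : y 0 = 0) (h00' : y' 0 = 0) :
    ∀ x ∈ Icc (0:ℝ) 1, y x = 0 ∧ y' x = 0 := by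
  obtain ⟨g, hg, hy1, hy2, hy3⟩ := hsol
  obtain ⟨hyc, hy'c⟩ := sol_cont hg hy1 hy2
  set v : ℝ → ℝ := fun t => ‖y t‖ + ‖y' t‖ with hvdef
  have hvc : ContinuousOn v (Icc 0 1) := hyc.norm.add hy'c.norm
  have hv0 : ∀ t, 0 ≤ v t := fun t => add_nonneg (norm_nonneg _) (norm_nonneg _)
  have hv00 : v 0 = 0 := by simp [hvdef, h00, h00']
  set h : ℝ → ℝ := fun t => 1 + ‖lam‖ * ‖1 / b₀ t‖ + ‖b₁ t / b₀ t‖ with hhdef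
  have hh0 : ∀ t, 0 ≤ h t := fun t =>
    add_nonneg (add_nonneg zero_le_one (mul_nonneg (norm_nonneg _) (norm_nonneg _)))
      (norm_nonneg _)
  have hhint : IntegrableOn h (Icc 0 1) volume := by
    apply int_Icc
    exact ((integrableOn_const measure_Ioo_lt_top.ne).add
      ((hco.2.2.2.1.norm.const_mul _))).add hco.2.2.2.2.norm
  set w : ℝ → ℝ := fun t => v t * h t with hwdef
  -- boundedness of v on Icc 0 1
  obtain ⟨x₁, hx₁mem, hx₁max⟩ := isCompact_Icc.exists_isMaxOn (nonempty_Icc.2 zero_le_one) hvc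
  have hw_int : IntegrableOn w (Icc 0 1) volume := by
    refine Integrable.bdd_mul (c := v x₁) hhint
      (hvc.aestronglyMeasurable measurableSet_Icc) ?_
    filter_upwards [ae_restrict_mem measurableSet_Icc] with t ht
    rw [Real.norm_eq_abs, abs_of_nonneg (hv0 t)]
    exact hx₁max ht
  have hres : volume.restrict (Ioo (0:ℝ) 1) = volume.restrict (Icc 0 1) :=
    Measure.restrict_congr_set Ioo_ae_eq_Icc
  -- key pointwise bound
  have key : ∀ᵐ t ∂(volume.restrict (Icc (0:ℝ) 1)), ‖y' t‖ + ‖g t‖ ≤ w t := by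
    rw [← hres]
    filter_upwards [hy3, hco.2.2.1] with t ht hb
    simp only [Pi.zero_apply] at ht
    have hbne : (b₀ t : ℂ) ≠ 0 := Complex.ofReal_ne_zero.2 hb.ne
    have hbne' : b₀ t ≠ 0 := hb.ne
    have hgt : g t = lam * y t * ((1 / b₀ t : ℝ) : ℂ) - ((b₁ t / b₀ t : ℝ) : ℂ) * y' t := by
      apply mul_left_cancel₀ hbne
      push_cast
      field_simp
      linear_combination ht
    have hgle : ‖g t‖ ≤ ‖lam‖ * ‖(1 / b₀ t : ℝ)‖ * ‖y t‖ + ‖(b₁ t / b₀ t : ℝ)‖ * ‖y' t‖ := by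
      rw [hgt]
      refine (norm_sub_le _ _).trans (add_le_add ?_ ?_)
      · rw [norm_mul, norm_mul, Complex.norm_real]; ring_nf; rfl
      · rw [norm_mul, Complex.norm_real]
    have h1 : (0:ℝ) ≤ ‖lam‖ * ‖(1 / b₀ t : ℝ)‖ := mul_nonneg (norm_nonneg _) (norm_nonneg _)
    have h2 : (0:ℝ) ≤ ‖(b₁ t / b₀ t : ℝ)‖ := norm_nonneg _
    have h3 : (0:ℝ) ≤ ‖y t‖ := norm_nonneg _
    have h4 : (0:ℝ) ≤ ‖y' t‖ := norm_nonneg _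
    simp only [hwdef, hvdef, hhdef]
    nlinarith [hgle]
  have hgIcc := int_Icc hg
  have ii_w : ∀ a b : ℝ, a ∈ Icc (0:ℝ) 1 → b ∈ Icc (0:ℝ) 1 → IntervalIntegrable w volume a b := by
    intro a b ha hb
    exact IntegrableOn.intervalIntegrable (hw_int.mono_set (uIcc_subset_Icc ha hb))
  -- key integral inequality
  have key2 : ∀ x ∈ Icc (0:ℝ) 1, v x ≤ ∫ t in (0:ℝ)..x, w t := by
    intro x hx
    have hx0 : (0:ℝ) ≤ x := hx.1
    have iiy' : IntervalIntegrable y' volume 0 x := ii_of_Icc hy'c.integrableOn_Icc hx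
    have iig : IntervalIntegrable g volume 0 x := ii_of_Icc hgIcc hx
    have e1 : ‖y x‖ ≤ ∫ t in (0:ℝ)..x, ‖y' t‖ := by
      rw [hy1 x hx, h00, zero_add]
      exact intervalIntegral.norm_integral_le_integral_norm hx0
    have e2 : ‖y' x‖ ≤ ∫ t in (0:ℝ)..x, ‖g t‖ := by
      rw [hy2 x hx, h00', zero_add]
      exact intervalIntegral.norm_integral_le_integral_norm hx0
    have e3 : (∫ t in (0:ℝ)..x, ‖y' t‖) + (∫ t in (0:ℝ)..x, ‖g t‖)
        = ∫ t in (0:ℝ)..x, (‖y' t‖ + ‖g t‖) :=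
      (intervalIntegral.integral_add iiy'.norm iig.norm).symm
    have e4 : (∫ t in (0:ℝ)..x, (‖y' t‖ + ‖g t‖)) ≤ ∫ t in (0:ℝ)..x, w t := by
      refine intervalIntegral.integral_mono_ae_restrict hx0 (iiy'.norm.add iig.norm)
        (ii_w 0 x (left_mem_Icc.2 zero_le_one) hx) ?_
      exact ae_restrict_of_ae_restrict_of_subset (Icc_subset_Icc le_rfl hx.2) key
    calc v x ≤ (∫ t in (0:ℝ)..x, ‖y' t‖) + (∫ t in (0:ℝ)..x, ‖g t‖) := add_le_add e1 e2
      _ = _ := e3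
      _ ≤ _ := e4
  -- the Gronwall-type sup argument
  set S : Set ℝ := {x | x ∈ Icc (0:ℝ) 1 ∧ ∀ t ∈ Icc (0:ℝ) x, v t = 0} with hSdef
  have h0S : (0:ℝ) ∈ S := by
    refine ⟨left_mem_Icc.2 zero_le_one, fun t ht => ?_⟩
    have : t = 0 := le_antisymm ht.2 ht.1
    rw [this, hv00]
  have hbdd : BddAbove S := ⟨1, fun x hx => hx.1.2⟩
  set s := sSup S with hsdef
  have hs0 : 0 ≤ s := le_csSup hbdd h0S
  have hs1 : s ≤ 1 := csSup_le ⟨0, h0S⟩ (fun x hx => hx.1.2)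
  have vlt : ∀ t, 0 ≤ t → t < s → v t = 0 := by
    intro t ht hts
    obtain ⟨x, hxS, htx⟩ := exists_lt_of_lt_csSup ⟨0, h0S⟩ hts
    exact hxS.2 t ⟨ht, htx.le⟩
  -- the integral of w up to c vanishes whenever v vanishes below c
  have hint0 : ∀ c, 0 ≤ c → c ≤ 1 → (∀ t, 0 ≤ t → t < c → v t = 0) →
      (∫ t in (0:ℝ)..c, w t) = 0 := by
    intro c hc0 hc1 hvz
    have hne : ∀ᵐ (x : ℝ) ∂(volume : Measure ℝ), x ≠ c := by
      rw [ae_iff]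
      have : {x : ℝ | ¬x ≠ c} = {c} := by ext x; simp
      rw [this]
      exact measure_singleton c
    have hcongr : (∫ t in (0:ℝ)..c, w t) = ∫ t in (0:ℝ)..c, (0:ℝ) := by
      apply intervalIntegral.integral_congr_ae
      filter_upwards [hne] with t htne hmem
      rw [uIoc_of_le hc0] at hmem
      have : v t = 0 := hvz t hmem.1.le (lt_of_le_of_ne hmem.2 htne)
      simp [hwdef, this]
    simpa using hcongr
  have vz : ∀ t ∈ Icc (0:ℝ) s, v t = 0 := by
    intro t ht
    rcases eq_or_lt_of_le ht.2 with heq | hlt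
    · rw [heq]
      refine le_antisymm ?_ (hv0 s)
      calc v s ≤ ∫ u in (0:ℝ)..s, w u := key2 s ⟨hs0, hs1⟩
        _ = 0 := hint0 s hs0 hs1 vlt
    · exact vlt t ht.1 hlt
  have hs1' : (1:ℝ) ≤ s := by
    by_contra hs
    push_neg at hs
    -- primitive from s
    set H : ℝ → ℝ := fun x => ∫ t in s..x, h t with hHdef
    have iih : IntervalIntegrable h volume s 1 :=
      IntegrableOn.intervalIntegrable (hhint.mono_set
        (uIcc_subset_Icc ⟨hs0, hs1⟩ (right_mem_Icc.2 zero_le_one)))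
    have hHc : ContinuousOn H (Icc s 1) := by
      have := intervalIntegral.continuousOn_primitive_interval' iih (left_mem_uIcc)
      rwa [uIcc_of_le hs.le] at this
    have hHs : H s = 0 := intervalIntegral.integral_same
    have hev : ∀ᶠ x in nhdsWithin s (Icc s 1), H x < 1/2 := by
      have hc := hHc s (left_mem_Icc.2 hs.le)
      exact hc.eventually_lt_const (by rw [hHs]; norm_num)
    rw [Filter.eventually_iff, Metric.mem_nhdsWithin_iff] at hev
    obtain ⟨ε, hε, hball⟩ := hev
    set b := min 1 (s + ε/2) with hbdef
    have hsb : s < b := lt_min hs (by linarith)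
    have hb1 : b ≤ 1 := min_le_left _ _
    have hHb : ∀ x ∈ Icc s b, H x < 1/2 := by
      intro x hxm
      apply hball
      constructor
      · rw [Metric.mem_ball, Real.dist_eq, abs_of_nonneg (by linarith [hxm.1])]
        have : x ≤ s + ε/2 := hxm.2.trans (min_le_right _ _)
        linarith
      · exact ⟨hxm.1, hxm.2.trans hb1⟩
    obtain ⟨x₀, hx₀mem, hx₀max⟩ := isCompact_Icc.exists_isMaxOn (nonempty_Icc.2 hsb.le)
      (hvc.mono (Icc_subset_Icc hs0 hb1))
    have hx₀Icc : x₀ ∈ Icc (0:ℝ) 1 := ⟨hs0.trans hx₀mem.1, hx₀mem.2.trans hb1⟩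
    have split : (∫ t in (0:ℝ)..x₀, w t)
        = (∫ t in (0:ℝ)..s, w t) + ∫ t in s..x₀, w t :=
      (intervalIntegral.integral_add_adjacent_intervals
        (ii_w 0 s (left_mem_Icc.2 zero_le_one) ⟨hs0, hs1⟩)
        (ii_w s x₀ ⟨hs0, hs1⟩ hx₀Icc)).symm
    have e5 : (∫ t in s..x₀, w t) ≤ ∫ t in s..x₀, v x₀ * h t := by
      refine intervalIntegral.integral_mono_ae_restrict hx₀mem.1
        (ii_w s x₀ ⟨hs0, hs1⟩ hx₀Icc)
        ((IntegrableOn.intervalIntegrable (hhint.mono_set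
          (uIcc_subset_Icc ⟨hs0, hs1⟩ hx₀Icc))).const_mul _) ?_
      filter_upwards [ae_restrict_mem measurableSet_Icc] with t htm
      have : v t ≤ v x₀ := hx₀max ⟨htm.1, htm.2.trans hx₀mem.2⟩
      exact mul_le_mul_of_nonneg_right this (hh0 t)
    have e6 : (∫ t in s..x₀, v x₀ * h t) = v x₀ * H x₀ := by
      rw [hHdef]
      exact intervalIntegral.integral_const_mul _ _
    have e7 : v x₀ * H x₀ ≤ v x₀ * (1/2) :=
      mul_le_mul_of_nonneg_left (hHb x₀ hx₀mem).le (hv0 x₀)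
    have hvx₀ : v x₀ ≤ v x₀ * (1/2) := by
      calc v x₀ ≤ ∫ t in (0:ℝ)..x₀, w t := key2 x₀ hx₀Icc
        _ = (∫ t in (0:ℝ)..s, w t) + ∫ t in s..x₀, w t := split
        _ = ∫ t in s..x₀, w t := by rw [hint0 s hs0 hs1 vlt, zero_add]
        _ ≤ ∫ t in s..x₀, v x₀ * h t := e5
        _ = v x₀ * H x₀ := e6
        _ ≤ v x₀ * (1/2) := e7
    have hle : v x₀ ≤ 0 := by
      by_contra hpos
      push_neg at hpos
      have h2 : v x₀ * (1/2) < v x₀ * 1 :=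
        mul_lt_mul_of_pos_left (by norm_num) hpos
      rw [mul_one] at h2
      exact absurd hvx₀ (not_le.2 h2)
    have hvx₀0 : v x₀ = 0 := le_antisymm hle (hv0 x₀)
    have hbS : b ∈ S := by
      refine ⟨⟨hs0.trans hsb.le, hb1⟩, fun t ht => ?_⟩
      rcases le_or_gt t s with hts | hts
      · exact vz t ⟨ht.1, hts⟩
      · refine le_antisymm ?_ (hv0 t)
        rw [← hvx₀0]
        exact hx₀max ⟨hts.le, ht.2⟩
    have : b ≤ s := le_csSup hbdd hbS
    linarith
  intro x hx
  have hvx : v x = 0 := vz x ⟨hx.1, hx.2.trans hs1'⟩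
  constructor
  · have : ‖y x‖ = 0 := by
      have := hv0 x
      simp only [hvdef] at hvx
      nlinarith [norm_nonneg (y x), norm_nonneg (y' x)]
    simpa using this
  · have : ‖y' x‖ = 0 := by
      simp only [hvdef] at hvx
      nlinarith [norm_nonneg (y x), norm_nonneg (y' x)]
    simpa using this

lemma ae_mem_Icc {ν : Measure ℝ} (hν : ν (Ioo (0:ℝ) 1)ᶜ = 0) :
    ∀ᵐ x ∂ν, x ∈ Ioo (0:ℝ) 1 := by
  rw [ae_iff]
  exact hν

lemma int_nu {ν : Measure ℝ} [IsProbabilityMeasure ν] (hν : ν (Ioo (0:ℝ) 1)ᶜ = 0)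
    {u : ℝ → ℂ} (hu : ContinuousOn u (Icc 0 1)) : Integrable u ν := by
  set cl : ℝ → ℝ := fun x => max 0 (min 1 x) with hcl
  have hclmem : ∀ x, cl x ∈ Icc (0:ℝ) 1 :=
    fun x => ⟨le_max_left _ _, max_le zero_le_one (min_le_left _ _)⟩
  have hclc : Continuous cl := continuous_const.max (continuous_const.min continuous_id)
  set F : ℝ → ℂ := fun x => u (cl x) with hF
  have hFc : Continuous F := hu.comp_continuous hclc hclmem
  obtain ⟨x₁, _, hx₁⟩ := isCompact_Icc.exists_isMaxOn (nonempty_Icc.2 zero_le_one) hu.norm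
  have hFint : Integrable F ν := by
    refine Integrable.mono' (integrable_const ‖u x₁‖) hFc.aestronglyMeasurable ?_
    filter_upwards with x
    exact hx₁ (hclmem x)
  refine hFint.congr ?_
  filter_upwards [ae_mem_Icc hν] with x hx
  have : cl x = x := by
    rw [hcl]
    simp only []
    rw [min_eq_right hx.2.le, max_eq_right hx.1.le]
  rw [hF]; simp only [this]

lemma int_comb {ν : Measure ℝ} [IsProbabilityMeasure ν] (hν : ν (Ioo (0:ℝ) 1)ᶜ = 0)
    {u u₁ u₂ : ℝ → ℂ} (hu₁ : ContinuousOn u₁ (Icc 0 1)) (hu₂ : ContinuousOn u₂ (Icc 0 1))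
    (c₁ c₂ : ℂ) (hu : ∀ x ∈ Icc (0:ℝ) 1, u x = c₁ * u₁ x + c₂ * u₂ x) :
    ∫ x, u x ∂ν = c₁ * ∫ x, u₁ x ∂ν + c₂ * ∫ x, u₂ x ∂ν := by
  rw [show ∫ x, u x ∂ν = ∫ x, (c₁ * u₁ x + c₂ * u₂ x) ∂ν from integral_congr_ae (by
    filter_upwards [ae_mem_Icc hν] with x hx
    exact hu x ⟨hx.1.le, hx.2.le⟩)]
  rw [integral_add ((int_nu hν hu₁).const_mul c₁) ((int_nu hν hu₂).const_mul c₂),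
    integral_const_mul, integral_const_mul]

lemma sol_cont' {b₀ b₁ : ℝ → ℝ} {lam : ℂ} {y y' : ℝ → ℂ} (h : IsSol b₀ b₁ lam y y') :
    ContinuousOn y (Icc 0 1) ∧ ContinuousOn y' (Icc 0 1) := by
  obtain ⟨g, hg, h1, h2, _⟩ := h
  exact sol_cont hg h1 h2

theorem stmt3 (b₀ b₁ : ℝ → ℝ) (hco : CoeffOK b₀ b₁)
    (ν₀ ν₁ : Measure ℝ) [IsProbabilityMeasure ν₀] [IsProbabilityMeasure ν₁]
    (hν₀ : ν₀ (Ioo (0:ℝ) 1)ᶜ = 0) (hν₁ : ν₁ (Ioo (0:ℝ) 1)ᶜ = 0)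
    (Y₁ Y₁' Y₂ Y₂' : ℂ → ℝ → ℂ)
    (hY₁ : ∀ lam : ℂ, IsSol b₀ b₁ lam (Y₁ lam) (Y₁' lam) ∧ Y₁ lam 0 = 1 ∧ Y₁' lam 0 = 0)
    (hY₂ : ∀ lam : ℂ, IsSol b₀ b₁ lam (Y₂ lam) (Y₂' lam) ∧ Y₂ lam 0 = 0 ∧ Y₂' lam 0 = 1)
    (lam : ℂ) :
    -- `lam` is an eigenvalue
    (∃ y y' : ℝ → ℂ, IsSol b₀ b₁ lam y y' ∧ (∃ x ∈ Icc (0:ℝ) 1, y x ≠ 0) ∧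
        y 0 = ∫ x, y x ∂ν₀ ∧ y 1 = ∫ x, y x ∂ν₁) ↔
    -- if and only if `Δ(lam) = 0`
    ((∫ x, Y₁ lam x ∂ν₀) - 1) * ((∫ x, Y₂ lam x ∂ν₁) - Y₂ lam 1) -
        (∫ x, Y₂ lam x ∂ν₀) * ((∫ x, Y₁ lam x ∂ν₁) - Y₁ lam 1) = 0 := by
  obtain ⟨hY1sol, hY10, hY1'0⟩ := hY₁ lam
  obtain ⟨hY2sol, hY20, hY2'0⟩ := hY₂ lam
  have hY1c := (sol_cont' hY1sol).1
  have hY2c := (sol_cont' hY2sol).1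
  constructor
  · rintro ⟨y, y', hsol, ⟨x₀, hx₀, hx₀ne⟩, hb0, hb1⟩
    have hcomb : IsSol b₀ b₁ lam (fun x => y 0 * Y₁ lam x + y' 0 * Y₂ lam x)
        (fun x => y 0 * Y₁' lam x + y' 0 * Y₂' lam x) := sol_lin _ _ hY1sol hY2sol
    have hz := sol_lin 1 (-1) hsol hcomb
    have hz0 : (fun x => 1 * y x + (-1) * (y 0 * Y₁ lam x + y' 0 * Y₂ lam x)) 0 = 0 := by
      simp [hY10, hY20]
    have hz'0 : (fun x => 1 * y' x + (-1) * (y 0 * Y₁' lam x + y' 0 * Y₂' lam x)) 0 = 0 := by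
      simp [hY1'0, hY2'0]
    have huniq := sol_unique hco hz hz0 hz'0
    have heq : ∀ x ∈ Icc (0:ℝ) 1, y x = y 0 * Y₁ lam x + y' 0 * Y₂ lam x := by
      intro x hx
      have := (huniq x hx).1
      linear_combination this
    have hI0 : ∫ x, y x ∂ν₀ = y 0 * (∫ x, Y₁ lam x ∂ν₀) + y' 0 * ∫ x, Y₂ lam x ∂ν₀ :=
      int_comb hν₀ hY1c hY2c _ _ heq
    have hI1 : ∫ x, y x ∂ν₁ = y 0 * (∫ x, Y₁ lam x ∂ν₁) + y' 0 * ∫ x, Y₂ lam x ∂ν₁ :=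
      int_comb hν₁ hY1c hY2c _ _ heq
    have e1 : ((∫ x, Y₁ lam x ∂ν₀) - 1) * y 0 + (∫ x, Y₂ lam x ∂ν₀) * y' 0 = 0 := by
      rw [hI0] at hb0
      linear_combination -hb0
    have e2 : ((∫ x, Y₁ lam x ∂ν₁) - Y₁ lam 1) * y 0
        + ((∫ x, Y₂ lam x ∂ν₁) - Y₂ lam 1) * y' 0 = 0 := by
      have h1 : y 1 = y 0 * Y₁ lam 1 + y' 0 * Y₂ lam 1 := heq 1 (right_mem_Icc.2 zero_le_one)
      rw [hI1, h1] at hb1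
      linear_combination -hb1
    have hcne : ¬(y 0 = 0 ∧ y' 0 = 0) := by
      rintro ⟨hc1, hc2⟩
      exact hx₀ne (sol_unique hco hsol hc1 hc2 x₀ hx₀).1
    rcases not_and_or.1 hcne with hc | hc
    · have hmul : (((∫ x, Y₁ lam x ∂ν₀) - 1) * ((∫ x, Y₂ lam x ∂ν₁) - Y₂ lam 1) -
          (∫ x, Y₂ lam x ∂ν₀) * ((∫ x, Y₁ lam x ∂ν₁) - Y₁ lam 1)) * y 0 = 0 := by
        linear_combination ((∫ x, Y₂ lam x ∂ν₁) - Y₂ lam 1) * e1 - (∫ x, Y₂ lam x ∂ν₀) * e2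
      exact (mul_eq_zero.1 hmul).resolve_right hc
    · have hmul : (((∫ x, Y₁ lam x ∂ν₀) - 1) * ((∫ x, Y₂ lam x ∂ν₁) - Y₂ lam 1) -
          (∫ x, Y₂ lam x ∂ν₀) * ((∫ x, Y₁ lam x ∂ν₁) - Y₁ lam 1)) * y' 0 = 0 := by
        linear_combination ((∫ x, Y₁ lam x ∂ν₀) - 1) * e2
          - ((∫ x, Y₁ lam x ∂ν₁) - Y₁ lam 1) * e1
      exact (mul_eq_zero.1 hmul).resolve_right hc
  · intro hdet
    obtain ⟨c₁, c₂, hc, e1, e2⟩ : ∃ c₁ c₂ : ℂ, ¬(c₁ = 0 ∧ c₂ = 0) ∧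
        ((∫ x, Y₁ lam x ∂ν₀) - 1) * c₁ + (∫ x, Y₂ lam x ∂ν₀) * c₂ = 0 ∧
        ((∫ x, Y₁ lam x ∂ν₁) - Y₁ lam 1) * c₁
          + ((∫ x, Y₂ lam x ∂ν₁) - Y₂ lam 1) * c₂ = 0 := by
      by_cases hAB : ((∫ x, Y₁ lam x ∂ν₀) - 1) = 0 ∧ (∫ x, Y₂ lam x ∂ν₀) = 0
      · by_cases hCD : ((∫ x, Y₁ lam x ∂ν₁) - Y₁ lam 1) = 0
            ∧ ((∫ x, Y₂ lam x ∂ν₁) - Y₂ lam 1) = 0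
        · exact ⟨1, 0, by simp, by rw [hAB.1]; ring, by rw [hCD.1]; ring⟩
        · refine ⟨((∫ x, Y₂ lam x ∂ν₁) - Y₂ lam 1),
            -((∫ x, Y₁ lam x ∂ν₁) - Y₁ lam 1), ?_, by rw [hAB.1, hAB.2]; ring, by ring⟩
          rintro ⟨h1, h2⟩
          exact hCD ⟨neg_eq_zero.1 h2, h1⟩
      · refine ⟨(∫ x, Y₂ lam x ∂ν₀), -((∫ x, Y₁ lam x ∂ν₀) - 1), ?_, by ring,
          by linear_combination -hdet⟩
        rintro ⟨h1, h2⟩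
        exact hAB ⟨neg_eq_zero.1 h2, h1⟩
    have hzsol := sol_lin c₁ c₂ hY1sol hY2sol
    have hI0 : ∫ x, (c₁ * Y₁ lam x + c₂ * Y₂ lam x) ∂ν₀
        = c₁ * (∫ x, Y₁ lam x ∂ν₀) + c₂ * ∫ x, Y₂ lam x ∂ν₀ :=
      int_comb hν₀ hY1c hY2c _ _ (fun x _ => rfl)
    have hI1 : ∫ x, (c₁ * Y₁ lam x + c₂ * Y₂ lam x) ∂ν₁
        = c₁ * (∫ x, Y₁ lam x ∂ν₁) + c₂ * ∫ x, Y₂ lam x ∂ν₁ :=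
      int_comb hν₁ hY1c hY2c _ _ (fun x _ => rfl)
    refine ⟨fun x => c₁ * Y₁ lam x + c₂ * Y₂ lam x,
      fun x => c₁ * Y₁' lam x + c₂ * Y₂' lam x, hzsol, ?_, ?_, ?_⟩
    · -- nontriviality
      by_cases hc1 : c₁ = 0
      · have hc2 : c₂ ≠ 0 := fun h => hc ⟨hc1, h⟩
        by_contra hno
        push_neg at hno
        obtain ⟨G, hG, hz1, hz2, _⟩ := hzsol
        have hz'c : ContinuousOn (fun x => c₁ * Y₁' lam x + c₂ * Y₂' lam x) (Icc 0 1) :=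
          (sol_cont hG hz1 hz2).2
        have hz'0 : c₁ * Y₁' lam 0 + c₂ * Y₂' lam 0 = c₂ := by
          rw [hY1'0, hY2'0]; ring
        have hcw : ContinuousWithinAt (fun x => c₁ * Y₁' lam x + c₂ * Y₂' lam x)
            (Icc 0 1) 0 := hz'c 0 (left_mem_Icc.2 zero_le_one)
        have hcw' : Filter.Tendsto (fun x => c₁ * Y₁' lam x + c₂ * Y₂' lam x)
            (nhdsWithin 0 (Icc 0 1)) (nhds c₂) := by
          have h : Filter.Tendsto (fun x => c₁ * Y₁' lam x + c₂ * Y₂' lam x)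
              (nhdsWithin 0 (Icc 0 1))
              (nhds ((fun x => c₁ * Y₁' lam x + c₂ * Y₂' lam x) 0)) := hcw
          simpa only [hz'0] using h
        have hball : ∀ᶠ t in nhdsWithin 0 (Icc 0 1),
            dist (c₁ * Y₁' lam t + c₂ * Y₂' lam t) c₂ < ‖c₂‖/2 :=
          Metric.tendsto_nhds.1 hcw' _ (half_pos (norm_pos_iff.2 hc2))
        rw [Filter.eventually_iff, Metric.mem_nhdsWithin_iff] at hball
        obtain ⟨ε, hε, hsub⟩ := hball
        set d := min 1 (ε/2) with hddef
        have hd0 : 0 < d := lt_min one_pos (half_pos hε)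
        have hd1 : d ≤ 1 := min_le_left _ _
        have hbound : ∀ t ∈ Set.uIoc (0:ℝ) d, ‖(c₁ * Y₁' lam t + c₂ * Y₂' lam t) - c₂‖ ≤ ‖c₂‖/2 := by
          intro t ht
          rw [uIoc_of_le hd0.le] at ht
          have hmem : t ∈ Metric.ball (0:ℝ) ε ∩ Icc 0 1 := by
            constructor
            · rw [Metric.mem_ball, Real.dist_eq, sub_zero, abs_of_pos ht.1]
              have : t ≤ ε/2 := ht.2.trans (min_le_right _ _)
              linarith
            · exact ⟨ht.1.le, ht.2.trans hd1⟩
          have := hsub hmem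
          rw [mem_setOf_eq, dist_eq_norm] at this
          exact this.le
        have hzd : c₁ * Y₁ lam d + c₂ * Y₂ lam d = 0 := hno d ⟨hd0.le, hd1⟩
        have hz00 : c₁ * Y₁ lam 0 + c₂ * Y₂ lam 0 = 0 := hno 0 (left_mem_Icc.2 zero_le_one)
        have hint : ∫ t in (0:ℝ)..d, (c₁ * Y₁' lam t + c₂ * Y₂' lam t) = 0 := by
          have h := hz1 d ⟨hd0.le, hd1⟩
          simp only [] at h
          rw [hzd, hz00, zero_add] at h
          exact h.symm
        have iiz' : IntervalIntegrable (fun x => c₁ * Y₁' lam x + c₂ * Y₂' lam x)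
            volume 0 d := ii_of_Icc hz'c.integrableOn_Icc ⟨hd0.le, hd1⟩
        have hsubint : ∫ t in (0:ℝ)..d, ((c₁ * Y₁' lam t + c₂ * Y₂' lam t) - c₂)
            = -((d:ℝ) • c₂) := by
          rw [intervalIntegral.integral_sub iiz' intervalIntegrable_const, hint,
            intervalIntegral.integral_const, zero_sub, sub_zero]
        have hnorm := intervalIntegral.norm_integral_le_of_norm_le_const hbound
        rw [hsubint] at hnorm
        rw [norm_neg, norm_smul, Real.norm_eq_abs, abs_of_pos hd0, sub_zero,
          abs_of_pos hd0] at hnorm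
        have hc2pos : 0 < ‖c₂‖ := norm_pos_iff.2 hc2
        nlinarith
      · refine ⟨0, left_mem_Icc.2 zero_le_one, ?_⟩
        simp only [hY10, hY20, mul_one, mul_zero, add_zero]
        exact hc1
    · simp only [hY10, hY20, mul_one, mul_zero, add_zero, hI0]
      linear_combination -e1
    · rw [hI1]
      linear_combination -e2
end
end

section
/- Let λ ∈ ℂ with Δ(λ) ≠ 0, let f : (0,1) → ℂ satisfy ∫₀¹ |f(x)|²/|b₀(x)| dx < ∞, and suppose u₀ : [0,1] → ℂ (with u₀, u₀' absolutely continuous) satisfies (l − λ)u₀ = f and u₀(0) = u₀(1) = 0. Define g₀(x) = ([y₂(1,λ) − ∫₀¹ y₂(·,λ)dν₁]·y₁(x,λ) − [y₁(1,λ) − ∫₀¹ y₁(·,λ)dν₁]·y₂(x,λ))/Δ(λ) and g₁(x) = ([1 − ∫₀¹ y₁(·,λ)dν₀]·y₂(x,λ) + y₁(x,λ)·∫₀¹ y₂(·,λ)dν₀)/Δ(λ). Then u := u₀ + (∫₀¹ u₀ dν₀)·g₀ + (∫₀¹ u₀ dν₁)·g₁ satisfies (l − λ)u = f together with the jump boundary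 conditions u(0) = ∫₀¹ u dν₀ and u(1) = ∫₀¹ u dν₁, and u is the unique such function. -/
open MeasureTheory Set

noncomputable section

/-- interval integrability on [0,x] ⊆ [0,1] from integrability on (0,1) -/
lemma intInt {E : Type*} [NormedAddCommGroup E] {g : ℝ → E}
    (hg : IntegrableOn g (Ioo 0 1) volume) {x : ℝ} (hx : x ∈ Icc (0:ℝ) 1) :
    IntervalIntegrable g volume 0 x := by
  rw [intervalIntegrable_iff_integrableOn_Ioc_of_le hx.1,
    integrableOn_Ioc_iff_integrableOn_Ioo]
  exact hg.mono_set (Ioo_subset_Ioo le_rfl hx.2)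

/-- continuity of the primitive on [0,1] -/
lemma primCont {E : Type*} [NormedAddCommGroup E] [NormedSpace ℝ E] {g : ℝ → E}
    (hg : IntegrableOn g (Ioo 0 1) volume) :
    ContinuousOn (fun x => ∫ t in (0:ℝ)..x, g t) (Icc 0 1) := by
  have h : IntegrableOn g (uIcc (0:ℝ) 1) volume := by
    rw [uIcc_of_le zero_le_one, integrableOn_Icc_iff_integrableOn_Ioo]; exact hg
  simpa [uIcc_of_le (zero_le_one : (0:ℝ) ≤ 1)] using
    intervalIntegral.continuousOn_primitive_interval h

lemma IsSolAux.contOn {b₀ b₁ : ℝ → ℝ} {lam : ℂ} {f y y' : ℝ → ℂ}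
    (h : IsSolAux b₀ b₁ lam f y y') :
    ContinuousOn y (Icc 0 1) ∧ ContinuousOn y' (Icc 0 1) := by
  obtain ⟨g, hg, h1, h2, -⟩ := h
  have hy' : ContinuousOn y' (Icc 0 1) :=
    (continuousOn_const.add (primCont hg)).congr h2
  have hy'int : IntegrableOn y' (Ioo 0 1) volume :=
    (hy'.integrableOn_Icc.mono_set Ioo_subset_Icc_self)
  exact ⟨(continuousOn_const.add (primCont hy'int)).congr h1, hy'⟩

lemma IsSolAux.deriv_integrableOn {b₀ b₁ : ℝ → ℝ} {lam : ℂ} {f y y' : ℝ → ℂ}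
    (h : IsSolAux b₀ b₁ lam f y y') : IntegrableOn y' (Ioo 0 1) volume :=
  (h.contOn.2.integrableOn_Icc.mono_set Ioo_subset_Icc_self)

/-- linear combinations of solutions -/
lemma IsSolAux.combo {b₀ b₁ : ℝ → ℝ} {lam : ℂ} {f₁ f₂ : ℝ → ℂ} {y y' z z' : ℝ → ℂ}
    (hy : IsSolAux b₀ b₁ lam f₁ y y') (hz : IsSolAux b₀ b₁ lam f₂ z z') (a b : ℂ) :
    IsSolAux b₀ b₁ lam (fun x => a * f₁ x + b * f₂ x)
      (fun x => a * y x + b * z x) (fun x => a * y' x + b * z' x) := by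
  have hyint := hy.deriv_integrableOn
  have hzint := hz.deriv_integrableOn
  obtain ⟨g, hgint, hy1, hy2, hy3⟩ := hy
  obtain ⟨k, hkint, hz1, hz2, hz3⟩ := hz
  refine ⟨fun x => a * g x + b * k x,
    (hgint.const_mul a).add (hkint.const_mul b), ?_, ?_, ?_⟩
  · intro x hx
    simp only []
    rw [intervalIntegral.integral_add ((intInt hyint hx).const_mul a)
        ((intInt hzint hx).const_mul b),
      intervalIntegral.integral_const_mul, intervalIntegral.integral_const_mul,
      hy1 x hx, hz1 x hx, hy1 0 (left_mem_Icc.2 zero_le_one),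
      hz1 0 (left_mem_Icc.2 zero_le_one)]
    simp only [intervalIntegral.integral_same]
    ring
  · intro x hx
    simp only []
    rw [intervalIntegral.integral_add ((intInt hgint hx).const_mul a)
        ((intInt hkint hx).const_mul b),
      intervalIntegral.integral_const_mul, intervalIntegral.integral_const_mul,
      hy2 x hx, hz2 x hx, hy2 0 (left_mem_Icc.2 zero_le_one),
      hz2 0 (left_mem_Icc.2 zero_le_one)]
    simp only [intervalIntegral.integral_same]
    ring
  · filter_upwards [hy3, hz3] with x h1 h2
    linear_combination a * h1 + b * h2

/-- integrability with respect to a measure concentrated on (0,1) -/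
lemma nuIntegrable {y : ℝ → ℂ} (hy : ContinuousOn y (Icc 0 1))
    (ν : Measure ℝ) [IsProbabilityMeasure ν] (hν : ν (Ioo (0:ℝ) 1)ᶜ = 0) :
    Integrable y ν := by
  have hcl : Continuous (fun x : ℝ => max 0 (min 1 x)) :=
    continuous_const.max (continuous_const.min continuous_id)
  have hmem : ∀ x : ℝ, max 0 (min 1 x) ∈ Icc (0:ℝ) 1 := fun x =>
    ⟨le_max_left _ _, max_le zero_le_one (min_le_left _ _)⟩
  have hψ : Continuous (y ∘ fun x : ℝ => max 0 (min 1 x)) :=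
    hy.comp_continuous hcl hmem
  obtain ⟨C, hC⟩ := isCompact_Icc.exists_bound_of_continuousOn hy
  have hae : ∀ᵐ x ∂ν, x ∈ Ioo (0:ℝ) 1 := by
    rw [ae_iff]
    exact hν
  have heq : y =ᵐ[ν] (y ∘ fun x : ℝ => max 0 (min 1 x)) := by
    filter_upwards [hae] with x hx
    have : max 0 (min 1 x) = x := by
      rw [min_eq_right hx.2.le, max_eq_right hx.1.le]
    simp [Function.comp, this]
  have hint : Integrable (y ∘ fun x : ℝ => max 0 (min 1 x)) ν := by
    refine Integrable.mono' (integrable_const C) hψ.aestronglyMeasurable ?_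
    filter_upwards with x
    exact hC _ (hmem x)
  exact hint.congr heq.symm

lemma nuIntegralCongr {y z : ℝ → ℂ} (h : ∀ x ∈ Ioo (0:ℝ) 1, y x = z x)
    (ν : Measure ℝ) (hν : ν (Ioo (0:ℝ) 1)ᶜ = 0) :
    ∫ x, y x ∂ν = ∫ x, z x ∂ν := by
  refine integral_congr_ae ?_
  have hae : ∀ᵐ x ∂ν, x ∈ Ioo (0:ℝ) 1 := by
    rw [ae_iff]; exact hν
  filter_upwards [hae] with x hx using h x hx

/-- Gronwall-type uniqueness: a solution of the homogeneous equation with zero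
initial data vanishes on [0,1]. -/
lemma uniq {b₀ b₁ : ℝ → ℝ} (hco : CoeffOK b₀ b₁) {lam : ℂ} {w w' : ℝ → ℂ}
    (hw : IsSol b₀ b₁ lam w w') (h0 : w 0 = 0) (h0' : w' 0 = 0) :
    ∀ x ∈ Icc (0:ℝ) 1, w x = 0 ∧ w' x = 0 := by
  have hw'Ioo : IntegrableOn w' (Ioo 0 1) volume := hw.deriv_integrableOn
  obtain ⟨g, hgint, hrep, hrep', hae⟩ := hw
  obtain ⟨hb₀m, hb₁m, hb₀neg, hib0, hib1⟩ := hco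
  set W : ℝ → ℂ := fun x => ∫ t in (0:ℝ)..x, w' t with hW
  set W' : ℝ → ℂ := fun x => ∫ t in (0:ℝ)..x, g t with hW'def
  have hwW : ∀ x ∈ Icc (0:ℝ) 1, w x = W x := by
    intro x hx; rw [hrep x hx, h0, zero_add]
  have hw'W' : ∀ x ∈ Icc (0:ℝ) 1, w' x = W' x := by
    intro x hx; rw [hrep' x hx, h0', zero_add]
  have hWc : ContinuousOn W (Icc 0 1) := primCont hw'Ioo
  have hW'c : ContinuousOn W' (Icc 0 1) := primCont hgint
  set h : ℝ → ℝ := fun x => ‖W x‖ + ‖W' x‖ with hh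
  have hhc : ContinuousOn h (Icc 0 1) := (hWc.norm.add hW'c.norm)
  have hhnn : ∀ x, 0 ≤ h x := fun x => add_nonneg (norm_nonneg _) (norm_nonneg _)
  set K : ℝ → ℝ := fun x => ‖lam‖ * |1 / b₀ x| + |b₁ x / b₀ x| + 1 with hK
  have hKnn : ∀ x, 0 ≤ K x := by
    intro x
    have h1 : (0:ℝ) ≤ ‖lam‖ * |1 / b₀ x| := mul_nonneg (norm_nonneg _) (abs_nonneg _)
    have h2 : (0:ℝ) ≤ |b₁ x / b₀ x| := abs_nonneg _
    simp only [hK]; linarith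
  have hKint : IntegrableOn K (Ioo 0 1) volume := by
    refine ((hib0.abs.const_mul ‖lam‖).add hib1.abs).add ?_
    simp [integrableOn_const, Real.volume_Ioo]
  have hmsb : AEStronglyMeasurable h (volume.restrict (Ioo (0:ℝ) 1)) := by
    have h1 : AEStronglyMeasurable h (volume.restrict (Icc (0:ℝ) 1)) :=
      hhc.aestronglyMeasurable measurableSet_Icc
    exact h1.mono_measure (Measure.restrict_mono Ioo_subset_Icc_self le_rfl)
  obtain ⟨C, hC⟩ := isCompact_Icc.exists_bound_of_continuousOn hhc
  have hKh : IntegrableOn (fun t => K t * h t) (Ioo 0 1) volume := by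
    have : IntegrableOn (fun t => h t * K t) (Ioo 0 1) volume := by
      refine Integrable.bdd_mul (c := C) hKint hmsb ?_
      filter_upwards [ae_restrict_mem measurableSet_Ioo] with x hx
      exact hC x (Ioo_subset_Icc_self hx)
    simpa [mul_comm] using this
  clear_value W W' h K
  -- the a.e. pointwise bound for g
  have haeb : ∀ᵐ t ∂(volume.restrict (Ioo (0:ℝ) 1)), ‖g t‖ ≤ (K t - 1) * h t := by
    filter_upwards [hae, hb₀neg, ae_restrict_mem measurableSet_Ioo] with t h1 h2 h3
    have htIcc : t ∈ Icc (0:ℝ) 1 := Ioo_subset_Icc_self h3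
    have hb0 : (0:ℝ) < |b₀ t| := abs_pos.2 (ne_of_lt h2)
    have heq : (b₀ t : ℂ) * g t = lam * w t - (b₁ t : ℂ) * w' t := by
      simp only [Pi.zero_apply] at h1
      linear_combination h1
    have hnorm : |b₀ t| * ‖g t‖ = ‖lam * w t - (b₁ t : ℂ) * w' t‖ := by
      rw [← heq, norm_mul, Complex.norm_real, Real.norm_eq_abs]
    have hWn : ‖W t‖ ≤ h t := by rw [hh]; exact le_add_of_nonneg_right (norm_nonneg _)
    have hW'n : ‖W' t‖ ≤ h t := by rw [hh]; exact le_add_of_nonneg_left (norm_nonneg _)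
    have hb1 : ‖lam * w t - (b₁ t : ℂ) * w' t‖ ≤ ‖lam‖ * h t + |b₁ t| * h t := by
      calc ‖lam * w t - (b₁ t : ℂ) * w' t‖ ≤ ‖lam * w t‖ + ‖(b₁ t : ℂ) * w' t‖ :=
        norm_sub_le _ _
      _ = ‖lam‖ * ‖W t‖ + |b₁ t| * ‖W' t‖ := by
        rw [norm_mul, norm_mul, Complex.norm_real, Real.norm_eq_abs,
          hwW t htIcc, hw'W' t htIcc]
      _ ≤ ‖lam‖ * h t + |b₁ t| * h t := by
        have e3 := mul_le_mul_of_nonneg_left hWn (norm_nonneg lam)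
        have e4 := mul_le_mul_of_nonneg_left hW'n (abs_nonneg (b₁ t))
        linarith
    have hKt : (K t - 1) = ‖lam‖ * |1 / b₀ t| + |b₁ t / b₀ t| := by
      simp only [hK]; ring
    have e1 : |1 / b₀ t| = 1 / |b₀ t| := by rw [abs_div, abs_one]
    have e2 : |b₁ t / b₀ t| = |b₁ t| / |b₀ t| := abs_div _ _
    rw [hKt, e1, e2, ← mul_le_mul_iff_right₀ hb0, hnorm]
    have expand : |b₀ t| * ((‖lam‖ * (1 / |b₀ t|) + |b₁ t| / |b₀ t|) * h t)
        = ‖lam‖ * h t + |b₁ t| * h t := by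
      field_simp
    rw [expand]
    exact hb1
  -- the key integral inequality
  have key : ∀ x ∈ Icc (0:ℝ) 1, h x ≤ ∫ t in (0:ℝ)..x, K t * h t := by
    intro x hx
    have hsub : Icc (0:ℝ) x ⊆ Icc 0 1 := Icc_subset_Icc le_rfl hx.2
    have hint_h : IntervalIntegrable h volume 0 x :=
      intInt (hhc.integrableOn_Icc.mono_set Ioo_subset_Icc_self) hx
    have hint_Kh : IntervalIntegrable (fun t => K t * h t) volume 0 x := intInt hKh hx
    have hint_w' : IntervalIntegrable w' volume 0 x := intInt hw'Ioo hx
    have hint_g : IntervalIntegrable g volume 0 x := intInt hgint hx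
    have hint_K1h : IntervalIntegrable (fun t => (K t - 1) * h t) volume 0 x := by
      have heq2 : (fun t => (K t - 1) * h t) = fun t => K t * h t - h t := by
        funext t; ring
      rw [heq2]; exact hint_Kh.sub hint_h
    have hb_ae : ∀ᵐ t ∂(volume.restrict (Icc (0:ℝ) x)), ‖g t‖ ≤ (K t - 1) * h t := by
      have hres : volume.restrict (Icc (0:ℝ) x) = volume.restrict (Ioo (0:ℝ) x) :=
        (Measure.restrict_congr_set (Ioo_ae_eq_Icc)).symm
      rw [hres]
      exact ae_restrict_of_ae_restrict_of_subset (Ioo_subset_Ioo le_rfl hx.2) haeb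
    have step1 : ‖W x‖ ≤ ∫ t in (0:ℝ)..x, h t := by
      calc ‖W x‖ = ‖∫ t in (0:ℝ)..x, w' t‖ := by rw [hW]
      _ ≤ ∫ t in (0:ℝ)..x, ‖w' t‖ :=
        intervalIntegral.norm_integral_le_integral_norm hx.1
      _ ≤ ∫ t in (0:ℝ)..x, h t := by
          refine intervalIntegral.integral_mono_on hx.1 hint_w'.norm hint_h ?_
          intro t ht
          rw [hw'W' t (hsub ht), hh]
          exact le_add_of_nonneg_left (norm_nonneg _)
    have step2 : ‖W' x‖ ≤ ∫ t in (0:ℝ)..x, (K t - 1) * h t := by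
      calc ‖W' x‖ = ‖∫ t in (0:ℝ)..x, g t‖ := by rw [hW'def]
      _ ≤ ∫ t in (0:ℝ)..x, ‖g t‖ :=
        intervalIntegral.norm_integral_le_integral_norm hx.1
      _ ≤ ∫ t in (0:ℝ)..x, (K t - 1) * h t :=
          intervalIntegral.integral_mono_ae_restrict hx.1 hint_g.norm hint_K1h hb_ae
    calc h x = ‖W x‖ + ‖W' x‖ := by rw [hh]
    _ ≤ (∫ t in (0:ℝ)..x, h t) + ∫ t in (0:ℝ)..x, (K t - 1) * h t :=
        add_le_add step1 step2
    _ = ∫ t in (0:ℝ)..x, K t * h t := by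
        rw [← intervalIntegral.integral_add hint_h hint_K1h]
        congr 1; funext t; ring
  -- contraction / sSup argument
  have h00 : h 0 = 0 := by simp [hh, hW, hW'def]
  set S := {x | x ∈ Icc (0:ℝ) 1 ∧ ∀ t ∈ Icc (0:ℝ) x, h t = 0} with hS
  have hS0 : (0:ℝ) ∈ S := by
    refine ⟨left_mem_Icc.2 zero_le_one, ?_⟩
    intro t ht
    have : t = 0 := le_antisymm ht.2 ht.1
    rw [this]; exact h00
  have hSne : S.Nonempty := ⟨0, hS0⟩
  have hSbdd : BddAbove S := ⟨1, fun x hx => hx.1.2⟩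
  set s := sSup S with hs
  have hsmem : s ∈ Icc (0:ℝ) 1 :=
    ⟨le_csSup hSbdd hS0, csSup_le hSne (fun x hx => hx.1.2)⟩
  have hzero_lt : ∀ t, 0 ≤ t → t < s → h t = 0 := by
    intro t ht0 hts
    obtain ⟨r, hrS, htr⟩ := exists_lt_of_lt_csSup hSne hts
    exact hrS.2 t ⟨ht0, htr.le⟩
  have hzero : ∀ t ∈ Icc (0:ℝ) s, h t = 0 := by
    intro t ht
    rcases lt_or_eq_of_le ht.2 with hlt | heq
    · exact hzero_lt t ht.1 hlt
    · have hlt' : ∀ u, 0 ≤ u → u < t → h u = 0 := fun u h1 h2 =>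
        hzero_lt u h1 (heq ▸ h2)
      have hint0 : (∫ u in (0:ℝ)..t, K u * h u) = 0 := by
        rw [intervalIntegral.integral_of_le ht.1]
        refine integral_eq_zero_of_ae ?_
        rw [Measure.restrict_congr_set (Ioo_ae_eq_Ioc (α := ℝ) (μ := volume) (a := 0) (b := t)).symm]
        filter_upwards [ae_restrict_mem measurableSet_Ioo] with u hu
        simp [hlt' u hu.1.le hu.2]
      have hk := key t ⟨ht.1, (le_of_eq heq).trans hsmem.2⟩
      rw [hint0] at hk
      exact le_antisymm hk (hhnn t)
  have hs1 : s = 1 := by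
    by_contra hne
    have hslt : s < 1 := lt_of_le_of_ne hsmem.2 hne
    have h0s : (0:ℝ) ≤ s := hsmem.1
    have hKIcc : IntegrableOn K (Icc 0 1) volume := by
      rw [integrableOn_Icc_iff_integrableOn_Ioo]; exact hKint
    set φ : ℝ → ℝ := fun x => ∫ t in s..x, K t with hφ
    have hφc : ContinuousOn φ (Icc s 1) := by
      have hsint : IntegrableOn K (uIcc s 1) volume := by
        rw [uIcc_of_le hslt.le]
        exact hKIcc.mono_set (Icc_subset_Icc h0s le_rfl)
      simpa [uIcc_of_le hslt.le] using intervalIntegral.continuousOn_primitive_interval hsint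
    have hφs : φ s = 0 := intervalIntegral.integral_same
    have hc : ContinuousWithinAt φ (Icc s 1) s := hφc s (left_mem_Icc.2 hslt.le)
    have hev : ∀ᶠ x in nhdsWithin s (Icc s 1), φ x < 1/2 :=
      hc (Iio_mem_nhds (by rw [hφs]; norm_num))
    obtain ⟨δ, hδ, hball⟩ := Metric.mem_nhdsWithin_iff.1 hev
    set s' := min (s + δ/2) 1 with hs'
    have hss' : s < s' := lt_min (by linarith) hslt
    have hs'le : s' ≤ 1 := min_le_right _ _
    have hφle : ∀ x ∈ Icc s s', φ x ≤ 1/2 := by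
      intro x hxm
      refine le_of_lt (hball ⟨?_, ⟨hxm.1, hxm.2.trans hs'le⟩⟩)
      rw [Metric.mem_ball, Real.dist_eq, abs_of_nonneg (by linarith [hxm.1])]
      have : x ≤ s + δ/2 := hxm.2.trans (min_le_left _ _)
      linarith
    have hIccsub : Icc s s' ⊆ Icc (0:ℝ) 1 := Icc_subset_Icc h0s hs'le
    obtain ⟨x₀, hx₀mem, hx₀max⟩ :=
      isCompact_Icc.exists_isMaxOn (nonempty_Icc.2 hss'.le) (hhc.mono hIccsub)
    obtain ⟨M, hM⟩ : ∃ M : ℝ, h x₀ = M := ⟨h x₀, rfl⟩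
    have hMnn : 0 ≤ M := hM ▸ hhnn x₀
    have hbound : ∀ x ∈ Icc s s', h x ≤ M * (1/2) := by
      intro x hxm
      have hxIcc : x ∈ Icc (0:ℝ) 1 := hIccsub hxm
      have hsx : s ≤ x := hxm.1
      have i3 : IntervalIntegrable (fun t => K t * h t) volume 0 x := intInt hKh hxIcc
      have i1 : IntervalIntegrable (fun t => K t * h t) volume 0 s :=
        i3.mono_set (by
          rw [uIcc_of_le h0s, uIcc_of_le (h0s.trans hsx)]
          exact Icc_subset_Icc le_rfl hsx)
      have i2 : IntervalIntegrable (fun t => K t * h t) volume s x :=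
        i3.mono_set (by
          rw [uIcc_of_le hsx, uIcc_of_le (h0s.trans hsx)]
          exact Icc_subset_Icc h0s le_rfl)
      have isplit : (∫ t in (0:ℝ)..x, K t * h t)
          = (∫ t in (0:ℝ)..s, K t * h t) + ∫ t in s..x, K t * h t :=
        (intervalIntegral.integral_add_adjacent_intervals i1 i2).symm
      have izero : (∫ t in (0:ℝ)..s, K t * h t) = 0 := by
        rw [intervalIntegral.integral_of_le h0s]
        refine integral_eq_zero_of_ae ?_
        rw [Measure.restrict_congr_set (Ioo_ae_eq_Ioc (α := ℝ) (μ := volume) (a := 0) (b := s)).symm]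
        filter_upwards [ae_restrict_mem measurableSet_Ioo] with u hu
        simp [hzero u ⟨hu.1.le, hu.2.le⟩]
      have iK : IntervalIntegrable K volume s x :=
        (intInt hKint hxIcc).mono_set (by
          rw [uIcc_of_le hsx, uIcc_of_le (h0s.trans hsx)]
          exact Icc_subset_Icc h0s le_rfl)
      have imono : (∫ t in s..x, K t * h t) ≤ ∫ t in s..x, K t * M := by
        refine intervalIntegral.integral_mono_on hsx i2 (iK.mul_const M) ?_
        intro t ht
        have hmax : h t ≤ M := hM ▸ hx₀max ⟨ht.1, ht.2.trans hxm.2⟩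
        exact mul_le_mul_of_nonneg_left hmax (hKnn t)
      calc h x ≤ ∫ t in (0:ℝ)..x, K t * h t := key x hxIcc
      _ = ∫ t in s..x, K t * h t := by rw [isplit, izero, zero_add]
      _ ≤ ∫ t in s..x, K t * M := imono
      _ = φ x * M := by rw [hφ]; exact intervalIntegral.integral_mul_const M K
      _ ≤ (1/2) * M := mul_le_mul_of_nonneg_right (hφle x hxm) hMnn
      _ = M * (1/2) := by ring
    have hM0 : M = 0 := by
      have hb := hbound x₀ hx₀mem
      rw [hM] at hb
      linarith
    have hs'S : s' ∈ S := by
      refine ⟨⟨h0s.trans hss'.le, hs'le⟩, ?_⟩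
      intro t ht
      rcases le_or_gt t s with hts | hst
      · exact hzero t ⟨ht.1, hts⟩
      · have hb := hbound t ⟨hst.le, ht.2⟩
        rw [hM0] at hb
        have := hhnn t
        linarith
    have : s' ≤ s := le_csSup hSbdd hs'S
    exact absurd this (not_le.2 hss')
  intro x hx
  have hx0 : h x = 0 := hzero x (by rw [hs1]; exact hx)
  have hW0 : W x = 0 := by
    refine norm_eq_zero.1 ?_
    have := norm_nonneg (W x); have := norm_nonneg (W' x)
    simp only [hh] at hx0
    linarith
  have hW'0 : W' x = 0 := by
    refine norm_eq_zero.1 ?_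
    have := norm_nonneg (W x); have := norm_nonneg (W' x)
    simp only [hh] at hx0
    linarith
  exact ⟨by rw [hwW x hx]; exact hW0, by rw [hw'W' x hx]; exact hW'0⟩

lemma IsSolAux.congr' {b₀ b₁ : ℝ → ℝ} {lam : ℂ} {f f2 y y2 y' y2' : ℝ → ℂ}
    (h : IsSolAux b₀ b₁ lam f y y') (hf : ∀ x, f2 x = f x) (hy : ∀ x, y2 x = y x)
    (hy' : ∀ x, y2' x = y' x) : IsSolAux b₀ b₁ lam f2 y2 y2' := by
  have h1 : f2 = f := funext hf
  have h2 : y2 = y := funext hy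
  have h3 : y2' = y' := funext hy'
  rw [h1, h2, h3]; exact h

lemma int_three (ν : Measure ℝ) (p q r : ℝ → ℂ) (hp : Integrable p ν)
    (hq : Integrable q ν) (hr : Integrable r ν) (a b : ℂ) :
    ∫ x, (p x + a * q x + b * r x) ∂ν
      = (∫ x, p x ∂ν) + a * (∫ x, q x ∂ν) + b * ∫ x, r x ∂ν := by
  rw [integral_add (f := fun x => p x + a * q x) (g := fun x => b * r x)
      (hp.add (hq.const_mul a)) (hr.const_mul b),
    integral_add (f := fun x => p x) (g := fun x => a * q x) hp (hq.const_mul a),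
    integral_const_mul, integral_const_mul]

theorem mainThm (b₀ b₁ : ℝ → ℝ) (hco : CoeffOK b₀ b₁)
    (ν₀ ν₁ : Measure ℝ) [IsProbabilityMeasure ν₀] [IsProbabilityMeasure ν₁]
    (hν₀ : ν₀ (Ioo (0:ℝ) 1)ᶜ = 0) (hν₁ : ν₁ (Ioo (0:ℝ) 1)ᶜ = 0)
    (y₁ y₁' y₂ y₂' : ℝ → ℂ) (lam : ℂ)
    (hY₁sol : IsSol b₀ b₁ lam y₁ y₁') (hY₁0 : y₁ 0 = 1) (hY₁'0 : y₁' 0 = 0)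
    (hY₂sol : IsSol b₀ b₁ lam y₂ y₂') (hY₂0 : y₂ 0 = 0) (hY₂'0 : y₂' 0 = 1)
    (hΔ : ((∫ x, y₁ x ∂ν₀) - 1) * ((∫ x, y₂ x ∂ν₁) - y₂ 1) -
        (∫ x, y₂ x ∂ν₀) * ((∫ x, y₁ x ∂ν₁) - y₁ 1) ≠ 0)
    (f : ℝ → ℂ) (u₀ u₀' : ℝ → ℂ) (hu₀ : IsSolAux b₀ b₁ lam f u₀ u₀')
    (hu₀0 : u₀ 0 = 0) (hu₀1 : u₀ 1 = 0) :
    letI Δ : ℂ := ((∫ x, y₁ x ∂ν₀) - 1) * ((∫ x, y₂ x ∂ν₁) - y₂ 1) -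
        (∫ x, y₂ x ∂ν₀) * ((∫ x, y₁ x ∂ν₁) - y₁ 1)
    letI g₀ : ℝ → ℂ := fun x =>
      ((y₂ 1 - ∫ t, y₂ t ∂ν₁) * y₁ x - (y₁ 1 - ∫ t, y₁ t ∂ν₁) * y₂ x) / Δ
    letI g₀' : ℝ → ℂ := fun x =>
      ((y₂ 1 - ∫ t, y₂ t ∂ν₁) * y₁' x - (y₁ 1 - ∫ t, y₁ t ∂ν₁) * y₂' x) / Δ
    letI g₁ : ℝ → ℂ := fun x =>
      ((1 - ∫ t, y₁ t ∂ν₀) * y₂ x + y₁ x * ∫ t, y₂ t ∂ν₀) / Δ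
    letI g₁' : ℝ → ℂ := fun x =>
      ((1 - ∫ t, y₁ t ∂ν₀) * y₂' x + y₁' x * ∫ t, y₂ t ∂ν₀) / Δ
    letI u : ℝ → ℂ := fun x =>
      u₀ x + (∫ t, u₀ t ∂ν₀) * g₀ x + (∫ t, u₀ t ∂ν₁) * g₁ x
    letI u' : ℝ → ℂ := fun x =>
      u₀' x + (∫ t, u₀ t ∂ν₀) * g₀' x + (∫ t, u₀ t ∂ν₁) * g₁' x
    IsSolAux b₀ b₁ lam f u u' ∧
      u 0 = ∫ x, u x ∂ν₀ ∧ u 1 = ∫ x, u x ∂ν₁ ∧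
      (∀ v v' : ℝ → ℂ, IsSolAux b₀ b₁ lam f v v' →
        v 0 = ∫ x, v x ∂ν₀ → v 1 = ∫ x, v x ∂ν₁ →
        ∀ x ∈ Icc (0:ℝ) 1, v x = u x) := by
  set I10 := ∫ x, y₁ x ∂ν₀ with hI10
  set I20 := ∫ x, y₂ x ∂ν₀ with hI20
  set I11 := ∫ x, y₁ x ∂ν₁ with hI11
  set I21 := ∫ x, y₂ x ∂ν₁ with hI21
  set c₀ := ∫ t, u₀ t ∂ν₀ with hc₀
  set c₁ := ∫ t, u₀ t ∂ν₁ with hc₁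
  set D := (I10 - 1) * (I21 - y₂ 1) - I20 * (I11 - y₁ 1) with hD
  set U : ℝ → ℂ := fun x =>
      u₀ x + c₀ * (((y₂ 1 - I21) * y₁ x - (y₁ 1 - I11) * y₂ x) / D) +
        c₁ * (((1 - I10) * y₂ x + y₁ x * I20) / D) with hU
  set U' : ℝ → ℂ := fun x =>
      u₀' x + c₀ * (((y₂ 1 - I21) * y₁' x - (y₁ 1 - I11) * y₂' x) / D) +
        c₁ * (((1 - I10) * y₂' x + y₁' x * I20) / D) with hU'
  -- continuity facts
  have hy₁c := (IsSolAux.contOn hY₁sol).1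
  have hy₂c := (IsSolAux.contOn hY₂sol).1
  have hu₀c := (IsSolAux.contOn hu₀).1
  have hG₀c : ContinuousOn
      (fun x => ((y₂ 1 - I21) * y₁ x - (y₁ 1 - I11) * y₂ x) / D) (Icc 0 1) :=
    ((continuousOn_const.mul hy₁c).sub (continuousOn_const.mul hy₂c)).div_const D
  have hG₁c : ContinuousOn
      (fun x => ((1 - I10) * y₂ x + y₁ x * I20) / D) (Icc 0 1) :=
    ((continuousOn_const.mul hy₂c).add (hy₁c.mul continuousOn_const)).div_const D
  have hUc : ContinuousOn U (Icc 0 1) := by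
    rw [hU]
    exact (hu₀c.add (continuousOn_const.mul hG₀c)).add (continuousOn_const.mul hG₁c)
  -- solution structure
  have hG₀sol : IsSolAux b₀ b₁ lam 0
      (fun x => ((y₂ 1 - I21) * y₁ x - (y₁ 1 - I11) * y₂ x) / D)
      (fun x => ((y₂ 1 - I21) * y₁' x - (y₁ 1 - I11) * y₂' x) / D) := by
    refine (IsSolAux.combo hY₁sol hY₂sol ((y₂ 1 - I21)/D) (-((y₁ 1 - I11)/D))).congr'
      ?_ ?_ ?_ <;> intro x
    · simp
    · ring
    · ring
  have hG₁sol : IsSolAux b₀ b₁ lam 0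
      (fun x => ((1 - I10) * y₂ x + y₁ x * I20) / D)
      (fun x => ((1 - I10) * y₂' x + y₁' x * I20) / D) := by
    refine (IsSolAux.combo hY₂sol hY₁sol ((1 - I10)/D) (I20/D)).congr' ?_ ?_ ?_ <;> intro x
    · simp
    · ring
    · ring
  have hUsol : IsSolAux b₀ b₁ lam f U U' := by
    refine ((hu₀.combo hG₀sol 1 c₀).combo hG₁sol 1 c₁).congr' ?_ ?_ ?_ <;> intro x
    · simp
    · simp only [hU]; ring
    · simp only [hU']; ring
  -- integrability wrt ν₀, ν₁
  have hy₁i0 : Integrable y₁ ν₀ := nuIntegrable hy₁c ν₀ hν₀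
  have hy₂i0 : Integrable y₂ ν₀ := nuIntegrable hy₂c ν₀ hν₀
  have hy₁i1 : Integrable y₁ ν₁ := nuIntegrable hy₁c ν₁ hν₁
  have hy₂i1 : Integrable y₂ ν₁ := nuIntegrable hy₂c ν₁ hν₁
  have hu₀i0 : Integrable u₀ ν₀ := nuIntegrable hu₀c ν₀ hν₀
  have hu₀i1 : Integrable u₀ ν₁ := nuIntegrable hu₀c ν₁ hν₁
  have hG₀i0 : Integrable (fun x => ((y₂ 1 - I21) * y₁ x - (y₁ 1 - I11) * y₂ x) / D) ν₀ :=
    nuIntegrable hG₀c ν₀ hν₀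
  have hG₀i1 : Integrable (fun x => ((y₂ 1 - I21) * y₁ x - (y₁ 1 - I11) * y₂ x) / D) ν₁ :=
    nuIntegrable hG₀c ν₁ hν₁
  have hG₁i0 : Integrable (fun x => ((1 - I10) * y₂ x + y₁ x * I20) / D) ν₀ :=
    nuIntegrable hG₁c ν₀ hν₀
  have hG₁i1 : Integrable (fun x => ((1 - I10) * y₂ x + y₁ x * I20) / D) ν₁ :=
    nuIntegrable hG₁c ν₁ hν₁
  -- integral formulas
  have hG₀ν : ∀ (ν : Measure ℝ), Integrable y₁ ν → Integrable y₂ ν →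
      ∫ x, ((y₂ 1 - I21) * y₁ x - (y₁ 1 - I11) * y₂ x) / D ∂ν
        = ((y₂ 1 - I21) * (∫ x, y₁ x ∂ν) - (y₁ 1 - I11) * ∫ x, y₂ x ∂ν) / D := by
    intro ν h1 h2
    rw [integral_div, integral_sub (h1.const_mul _) (h2.const_mul _),
      integral_const_mul, integral_const_mul]
  have hG₁ν : ∀ (ν : Measure ℝ), Integrable y₁ ν → Integrable y₂ ν →
      ∫ x, ((1 - I10) * y₂ x + y₁ x * I20) / D ∂ν
        = ((1 - I10) * (∫ x, y₂ x ∂ν) + (∫ x, y₁ x ∂ν) * I20) / D := by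
    intro ν h1 h2
    rw [integral_div, integral_add (h2.const_mul _) (h1.mul_const _),
      integral_const_mul, integral_mul_const]
  have hUν₀ : (∫ x, U x ∂ν₀) = c₀ + c₀ * (((y₂ 1 - I21) * I10 - (y₁ 1 - I11) * I20) / D)
      + c₁ * (((1 - I10) * I20 + I10 * I20) / D) := by
    rw [hU, int_three ν₀ u₀ _ _ hu₀i0 hG₀i0 hG₁i0 c₀ c₁,
      hG₀ν ν₀ hy₁i0 hy₂i0, hG₁ν ν₀ hy₁i0 hy₂i0, ← hI10, ← hI20, ← hc₀]
  have hUν₁ : (∫ x, U x ∂ν₁) = c₁ + c₀ * (((y₂ 1 - I21) * I11 - (y₁ 1 - I11) * I21) / D)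
      + c₁ * (((1 - I10) * I21 + I11 * I20) / D) := by
    rw [hU, int_three ν₁ u₀ _ _ hu₀i1 hG₀i1 hG₁i1 c₀ c₁,
      hG₀ν ν₁ hy₁i1 hy₂i1, hG₁ν ν₁ hy₁i1 hy₂i1, ← hI11, ← hI21, ← hc₁]
  have hDne : ((I10 - 1) * (I21 - y₂ 1) - I20 * (I11 - y₁ 1)) ≠ 0 := by
    rw [← hD]; exact hΔ
  -- boundary conditions
  have comp2 : U 0 = ∫ x, U x ∂ν₀ := by
    rw [hUν₀]
    simp only [hU]
    rw [hu₀0, hY₁0, hY₂0, hD]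
    field_simp
    ring
  have comp3 : U 1 = ∫ x, U x ∂ν₁ := by
    rw [hUν₁]
    simp only [hU]
    rw [hu₀1, hD]
    field_simp
    ring
  refine ⟨hUsol, comp2, comp3, ?_⟩
  -- uniqueness
  intro v v' hv hv0 hv1
  have hvc := (IsSolAux.contOn hv).1
  have hvi0 : Integrable v ν₀ := nuIntegrable hvc ν₀ hν₀
  have hvi1 : Integrable v ν₁ := nuIntegrable hvc ν₁ hν₁
  have hUi0 : Integrable U ν₀ := nuIntegrable hUc ν₀ hν₀
  have hUi1 : Integrable U ν₁ := nuIntegrable hUc ν₁ hν₁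
  obtain ⟨α, hα⟩ : ∃ a : ℂ, a = v 0 - U 0 := ⟨_, rfl⟩
  obtain ⟨β, hβ⟩ : ∃ a : ℂ, a = v' 0 - U' 0 := ⟨_, rfl⟩
  have hwsol : IsSolAux b₀ b₁ lam 0 (fun x => v x - U x) (fun x => v' x - U' x) := by
    refine ((hv.combo hUsol 1 (-1)).congr') ?_ ?_ ?_ <;> intro x
    · simp
    · ring
    · ring
  have hcomb : IsSolAux b₀ b₁ lam 0 (fun x => α * y₁ x + β * y₂ x)
      (fun x => α * y₁' x + β * y₂' x) := by
    refine ((hY₁sol.combo hY₂sol α β).congr') ?_ ?_ ?_ <;> intro x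
    · simp
    · ring
    · ring
  have hzsol : IsSolAux b₀ b₁ lam 0
      (fun x => (v x - U x) - (α * y₁ x + β * y₂ x))
      (fun x => (v' x - U' x) - (α * y₁' x + β * y₂' x)) := by
    refine ((hwsol.combo hcomb 1 (-1)).congr') ?_ ?_ ?_ <;> intro x
    · simp
    · ring
    · ring
  have hz0 : (fun x => (v x - U x) - (α * y₁ x + β * y₂ x)) 0 = 0 := by
    simp only []
    rw [hY₁0, hY₂0, hα]; ring
  have hz'0 : (fun x => (v' x - U' x) - (α * y₁' x + β * y₂' x)) 0 = 0 := by
    simp only []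
    rw [hY₁'0, hY₂'0, hβ]; ring
  have hzero := uniq hco hzsol hz0 hz'0
  have hwt : ∀ x ∈ Icc (0:ℝ) 1, v x - U x = α * y₁ x + β * y₂ x := by
    intro x hx
    have h1 := (hzero x hx).1
    beta_reduce at h1
    rwa [sub_eq_zero] at h1
  -- integral equations
  have hwi0 : (∫ x, (v x - U x) ∂ν₀) = α * I10 + β * I20 := by
    rw [nuIntegralCongr (fun x hx => hwt x (Ioo_subset_Icc_self hx)) ν₀ hν₀,
      integral_add (hy₁i0.const_mul α) (hy₂i0.const_mul β),
      integral_const_mul, integral_const_mul, ← hI10, ← hI20]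
  have hwi1 : (∫ x, (v x - U x) ∂ν₁) = α * I11 + β * I21 := by
    rw [nuIntegralCongr (fun x hx => hwt x (Ioo_subset_Icc_self hx)) ν₁ hν₁,
      integral_add (hy₁i1.const_mul α) (hy₂i1.const_mul β),
      integral_const_mul, integral_const_mul, ← hI11, ← hI21]
  have heq0 : v 0 - U 0 = ∫ x, (v x - U x) ∂ν₀ := by
    rw [integral_sub hvi0 hUi0, ← hv0, ← comp2]
  have heq1 : v 1 - U 1 = ∫ x, (v x - U x) ∂ν₁ := by
    rw [integral_sub hvi1 hUi1, ← hv1, ← comp3]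
  have hw1 := hwt 1 (right_mem_Icc.2 zero_le_one)
  have eq1 : α * (I10 - 1) + β * I20 = 0 := by
    linear_combination -heq0 - hwi0 - hα
  have eq2 : α * (I11 - y₁ 1) + β * (I21 - y₂ 1) = 0 := by
    linear_combination hw1 - heq1 - hwi1
  have hα0 : α * D = 0 := by
    linear_combination α * hD + (I21 - y₂ 1) * eq1 - I20 * eq2
  have hβ0 : β * D = 0 := by
    linear_combination β * hD + (I10 - 1) * eq2 - (I11 - y₁ 1) * eq1
  have hαz : α = 0 := by
    rcases mul_eq_zero.1 hα0 with h | h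
    · exact h
    · exact absurd h hΔ
  have hβz : β = 0 := by
    rcases mul_eq_zero.1 hβ0 with h | h
    · exact h
    · exact absurd h hΔ
  intro x hx
  have h1 := hwt x hx
  rw [hαz, hβz] at h1
  simp only [zero_mul, add_zero, zero_add] at h1
  rw [sub_eq_zero] at h1
  exact h1

theorem stmt4 (b₀ b₁ : ℝ → ℝ) (hco : CoeffOK b₀ b₁)
    (ν₀ ν₁ : Measure ℝ) [IsProbabilityMeasure ν₀] [IsProbabilityMeasure ν₁]
    (hν₀ : ν₀ (Ioo (0:ℝ) 1)ᶜ = 0) (hν₁ : ν₁ (Ioo (0:ℝ) 1)ᶜ = 0)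
    (Y₁ Y₁' Y₂ Y₂' : ℂ → ℝ → ℂ)
    (hY₁ : ∀ lam : ℂ, IsSol b₀ b₁ lam (Y₁ lam) (Y₁' lam) ∧ Y₁ lam 0 = 1 ∧ Y₁' lam 0 = 0)
    (hY₂ : ∀ lam : ℂ, IsSol b₀ b₁ lam (Y₂ lam) (Y₂' lam) ∧ Y₂ lam 0 = 0 ∧ Y₂' lam 0 = 1)
    (lam : ℂ)
    (hΔ : ((∫ x, Y₁ lam x ∂ν₀) - 1) * ((∫ x, Y₂ lam x ∂ν₁) - Y₂ lam 1) -
        (∫ x, Y₂ lam x ∂ν₀) * ((∫ x, Y₁ lam x ∂ν₁) - Y₁ lam 1) ≠ 0)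
    (f : ℝ → ℂ) (hfm : Measurable f)
    (hf : IntegrableOn (fun x => ‖f x‖ ^ 2 / |b₀ x|) (Ioo 0 1) volume)
    (u₀ u₀' : ℝ → ℂ) (hu₀ : IsSolAux b₀ b₁ lam f u₀ u₀')
    (hu₀0 : u₀ 0 = 0) (hu₀1 : u₀ 1 = 0) :
    letI Δ : ℂ := ((∫ x, Y₁ lam x ∂ν₀) - 1) * ((∫ x, Y₂ lam x ∂ν₁) - Y₂ lam 1) -
        (∫ x, Y₂ lam x ∂ν₀) * ((∫ x, Y₁ lam x ∂ν₁) - Y₁ lam 1)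
    letI g₀ : ℝ → ℂ := fun x =>
      ((Y₂ lam 1 - ∫ t, Y₂ lam t ∂ν₁) * Y₁ lam x -
        (Y₁ lam 1 - ∫ t, Y₁ lam t ∂ν₁) * Y₂ lam x) / Δ
    letI g₀' : ℝ → ℂ := fun x =>
      ((Y₂ lam 1 - ∫ t, Y₂ lam t ∂ν₁) * Y₁' lam x -
        (Y₁ lam 1 - ∫ t, Y₁ lam t ∂ν₁) * Y₂' lam x) / Δ
    letI g₁ : ℝ → ℂ := fun x =>
      ((1 - ∫ t, Y₁ lam t ∂ν₀) * Y₂ lam x + Y₁ lam x * ∫ t, Y₂ lam t ∂ν₀) / Δ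
    letI g₁' : ℝ → ℂ := fun x =>
      ((1 - ∫ t, Y₁ lam t ∂ν₀) * Y₂' lam x + Y₁' lam x * ∫ t, Y₂ lam t ∂ν₀) / Δ
    letI u : ℝ → ℂ := fun x =>
      u₀ x + (∫ t, u₀ t ∂ν₀) * g₀ x + (∫ t, u₀ t ∂ν₁) * g₁ x
    letI u' : ℝ → ℂ := fun x =>
      u₀' x + (∫ t, u₀ t ∂ν₀) * g₀' x + (∫ t, u₀ t ∂ν₁) * g₁' x
    IsSolAux b₀ b₁ lam f u u' ∧
      u 0 = ∫ x, u x ∂ν₀ ∧ u 1 = ∫ x, u x ∂ν₁ ∧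
      (∀ v v' : ℝ → ℂ, IsSolAux b₀ b₁ lam f v v' →
        v 0 = ∫ x, v x ∂ν₀ → v 1 = ∫ x, v x ∂ν₁ →
        ∀ x ∈ Icc (0:ℝ) 1, v x = u x) := by
  obtain ⟨hY₁sol, hY₁0, hY₁'0⟩ := hY₁ lam
  obtain ⟨hY₂sol, hY₂0, hY₂'0⟩ := hY₂ lam
  exact mainThm b₀ b₁ hco ν₀ ν₁ hν₀ hν₁ (Y₁ lam) (Y₁' lam) (Y₂ lam) (Y₂' lam) lam
    hY₁sol hY₁0 hY₁'0 hY₂sol hY₂0 hY₂'0 hΔ f u₀ u₀' hu₀ hu₀0 hu₀1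
end
end

section
/- For every a ∈ (0,1) and every λ ∈ ℂ with λ ≠ 0, one has det [[cos(a√λ) − 1, sin(a√λ)/√λ], [cos(a√λ) − cos(√λ), sin(a√λ)/√λ − sin(√λ)/√λ]] = −(4/√λ)·sin(√λ(1−a)/2)·sin(√λ a/2)·sin(√λ/2), where √λ denotes a fixed choice of complex square root of λ (both sides are unchanged if √λ is replaced by −√λ). -/
open Complex

lemma key8 (u v : ℂ) :
    (Complex.cos (2 * u) - 1) * (Complex.sin (2 * u) - Complex.sin (2 * v)) -
      Complex.sin (2 * u) * (Complex.cos (2 * u) - Complex.cos (2 * v)) =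
    -4 * Complex.sin (v - u) * Complex.sin u * Complex.sin v := by
  rw [Complex.sin_two_mul, Complex.cos_two_mul, Complex.sin_two_mul,
    Complex.cos_two_mul, Complex.sin_sub]
  have h1 := Complex.sin_sq_add_cos_sq u
  have h2 := Complex.sin_sq_add_cos_sq v
  linear_combination (-4 * Complex.sin v * Complex.cos v) * h1 +
    (4 * Complex.sin u * Complex.cos u) * h2

theorem stmt8 (a : ℝ) (ha : a ∈ Set.Ioo (0:ℝ) 1) (lam s : ℂ)
    (hlam : lam ≠ 0) (hs : s ^ 2 = lam) :
    (Complex.cos ((a : ℂ) * s) - 1) *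
        (Complex.sin ((a : ℂ) * s) / s - Complex.sin s / s) -
      (Complex.sin ((a : ℂ) * s) / s) *
        (Complex.cos ((a : ℂ) * s) - Complex.cos s) =
    -(4 / s) * Complex.sin (s * (1 - (a : ℂ)) / 2) *
      Complex.sin (s * (a : ℂ) / 2) * Complex.sin (s / 2) := by
  have hs0 : s ≠ 0 := by
    intro h; apply hlam; rw [← hs, h]; ring
  have hkey := key8 ((a : ℂ) * s / 2) (s / 2)
  have e1 : 2 * ((a : ℂ) * s / 2) = (a : ℂ) * s := by ring
  have e2 : 2 * (s / 2) = s := by ring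
  have e3 : s / 2 - (a : ℂ) * s / 2 = s * (1 - (a : ℂ)) / 2 := by ring
  have e4 : (a : ℂ) * s / 2 = s * (a : ℂ) / 2 := by ring
  rw [e1, e2, e3, e4] at hkey
  field_simp
  rw [e4]
  linear_combination hkey
end

section
/- Fix a ∈ (0,1). A number λ ∈ ℂ is an eigenvalue of the problem −y'' = λy, y(0) = y(a) = y(1), if and only if Δ_a(λ) = 0; equivalently, if and only if sin(√λ(1−a)/2)·sin(√λ a/2)·sin(√λ/2) = 0 for a (hence any) complex square root √λ of λ. -/
open Set

noncomputable section

/-- `y` is a (twice continuously differentiable) solution of `-y'' = lam y` on `[0,1]`. -/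
def IsSolNeg (lam : ℂ) (y : ℝ → ℂ) : Prop :=
  ContDiffOn ℝ 2 y (Icc 0 1) ∧
    ∀ x ∈ Icc (0:ℝ) 1, -(iteratedDerivWithin 2 y (Icc (0:ℝ) 1) x) = lam * y x

/-- `lam` is an eigenvalue of the problem `-y'' = lam y`, `y(0) = y(a) = y(1)`. -/
def IsEigA (a : ℝ) (lam : ℂ) : Prop :=
  ∃ y : ℝ → ℂ, IsSolNeg lam y ∧ (∃ x ∈ Icc (0:ℝ) 1, y x ≠ 0) ∧
    y 0 = y a ∧ y a = y 1

lemma hda_mul (s : ℂ) (x : ℝ) : HasDerivAt (fun x : ℝ => s * (x:ℂ)) s x := by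
  simpa using (Complex.ofRealCLM.hasDerivAt (x := x)).const_mul s

lemma hda_cos (s : ℂ) (x : ℝ) :
    HasDerivAt (fun x : ℝ => Complex.cos (s * x)) (-Complex.sin (s * x) * s) x :=
  by have := (Complex.hasDerivAt_cos (s * x)).comp x (hda_mul s x); exact this

lemma hda_sin (s : ℂ) (x : ℝ) :
    HasDerivAt (fun x : ℝ => Complex.sin (s * x)) (Complex.cos (s * x) * s) x :=
  by have := (Complex.hasDerivAt_sin (s * x)).comp x (hda_mul s x); exact this

lemma cd_trig (v0 v1 s : ℂ) :
    ContDiff ℝ 2 (fun x : ℝ => v0 * Complex.cos (s * x) + v1 * Complex.sin (s * x)) := by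
  have hin : ContDiff ℝ 2 (fun x : ℝ => s * (x:ℂ)) :=
    contDiff_const.mul Complex.ofRealCLM.contDiff
  exact (contDiff_const.mul (Complex.contDiff_cos.restrict_scalars ℝ |>.comp hin)).add
    (contDiff_const.mul (Complex.contDiff_sin.restrict_scalars ℝ |>.comp hin))

/-- first derivative of the trig combination -/
lemma hda_trig (v0 v1 s : ℂ) (x : ℝ) :
    HasDerivAt (fun x : ℝ => v0 * Complex.cos (s * x) + v1 * Complex.sin (s * x))
      (s * (-v0 * Complex.sin (s * x) + v1 * Complex.cos (s * x))) x := by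
  have := ((hda_cos s x).const_mul v0).add ((hda_sin s x).const_mul v1)
  refine this.congr_deriv ?_
  ring

/-- second derivative -/
lemma hda_trig2 (v0 v1 s : ℂ) (x : ℝ) :
    HasDerivAt (fun x : ℝ => s * (-v0 * Complex.sin (s * x) + v1 * Complex.cos (s * x)))
      (-(s^2) * (v0 * Complex.cos (s * x) + v1 * Complex.sin (s * x))) x := by
  have := (((hda_sin s x).const_mul (-v0)).add ((hda_cos s x).const_mul v1)).const_mul s
  refine this.congr_deriv ?_
  ring

lemma isSolNeg_trig (v0 v1 s : ℂ) :
    IsSolNeg (s^2) (fun x : ℝ => v0 * Complex.cos (s * x) + v1 * Complex.sin (s * x)) := by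
  set S : Set ℝ := Icc 0 1 with hS
  have hU : UniqueDiffOn ℝ S := uniqueDiffOn_Icc zero_lt_one
  set y : ℝ → ℂ := fun x : ℝ => v0 * Complex.cos (s * x) + v1 * Complex.sin (s * x) with hy
  set y' : ℝ → ℂ := fun x : ℝ => s * (-v0 * Complex.sin (s * x) + v1 * Complex.cos (s * x))
    with hy'
  refine ⟨(cd_trig v0 v1 s).contDiffOn, ?_⟩
  intro x hx
  have h2 : iteratedDerivWithin 2 y S x = derivWithin (derivWithin y S) S x := by
    rw [iteratedDerivWithin_succ]
    refine derivWithin_congr (fun z hz => congrFun iteratedDerivWithin_one z)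
      (congrFun iteratedDerivWithin_one x)
  have hder : ∀ z ∈ S, derivWithin y S z = y' z := fun z hz =>
    (hda_trig v0 v1 s z).hasDerivWithinAt.derivWithin (hU z hz)
  have h3 : derivWithin (derivWithin y S) S x = derivWithin y' S x :=
    derivWithin_congr hder (hder x hx)
  have h4 : derivWithin y' S x = -(s^2) * y x :=
    (hda_trig2 v0 v1 s x).hasDerivWithinAt.derivWithin (hU x hx)
  rw [h2, h3, h4]; ring

lemma rep_sol {s : ℂ} (hs : s ≠ 0) {y : ℝ → ℂ} (h : IsSolNeg (s^2) y) :
    ∀ x ∈ Icc (0:ℝ) 1,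
      y x = y 0 * Complex.cos (s * x)
        + (derivWithin y (Icc (0:ℝ) 1) 0 / s) * Complex.sin (s * x) := by
  set S : Set ℝ := Icc 0 1 with hS
  have hU : UniqueDiffOn ℝ S := uniqueDiffOn_Icc zero_lt_one
  obtain ⟨hcd, hode⟩ := h
  set g : ℝ → ℂ := derivWithin y S with hg
  have hyd : ∀ x ∈ S, HasDerivWithinAt y (g x) S x := fun x hx =>
    ((hcd.differentiableOn (by norm_num) x hx).hasDerivWithinAt)
  have hgcd : ContDiffOn ℝ 1 g S := hcd.derivWithin hU (by norm_num)
  have hgd : ∀ x ∈ S, HasDerivWithinAt g (-(s^2) * y x) S x := by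
    intro x hx
    have h1 : HasDerivWithinAt g (derivWithin g S x) S x :=
      (hgcd.differentiableOn (by norm_num) x hx).hasDerivWithinAt
    have h2 : derivWithin g S x = iteratedDerivWithin 2 y S x := by
      rw [iteratedDerivWithin_succ]
      exact derivWithin_congr (fun z hz => (congrFun iteratedDerivWithin_one z).symm)
        (congrFun iteratedDerivWithin_one x).symm
    have h3 : iteratedDerivWithin 2 y S x = -(s^2) * y x := by
      have h := hode x hx; linear_combination -h
    rwa [h2, h3] at h1
  set F : ℝ → ℂ := fun x => y x * Complex.cos (s * x) - (g x / s) * Complex.sin (s * x) with hF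
  set G : ℝ → ℂ := fun x => y x * Complex.sin (s * x) + (g x / s) * Complex.cos (s * x) with hG
  have hFd : ∀ x ∈ S, HasDerivWithinAt F 0 S x := by
    intro x hx
    have := ((hyd x hx).mul (hda_cos s x).hasDerivWithinAt).sub
      ((((hgd x hx).div_const s)).mul (hda_sin s x).hasDerivWithinAt)
    refine this.congr_deriv (Eq.symm ?_)
    field_simp
    ring
  have hGd : ∀ x ∈ S, HasDerivWithinAt G 0 S x := by
    intro x hx
    have := ((hyd x hx).mul (hda_sin s x).hasDerivWithinAt).add
      ((((hgd x hx).div_const s)).mul (hda_cos s x).hasDerivWithinAt)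
    refine this.congr_deriv (Eq.symm ?_)
    field_simp
    ring
  have hFc : ∀ x ∈ S, F x = F 0 := by
    refine constant_of_derivWithin_zero (fun x hx => (hFd x hx).differentiableWithinAt) ?_
    intro x hx
    exact (hFd x (Ico_subset_Icc_self hx)).derivWithin (hU x (Ico_subset_Icc_self hx))
  have hGc : ∀ x ∈ S, G x = G 0 := by
    refine constant_of_derivWithin_zero (fun x hx => (hGd x hx).differentiableWithinAt) ?_
    intro x hx
    exact (hGd x (Ico_subset_Icc_self hx)).derivWithin (hU x (Ico_subset_Icc_self hx))
  intro x hx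
  have hF0 : F 0 = y 0 := by simp [hF]
  have hG0 : G 0 = g 0 / s := by simp [hG]
  have e1 : F x = y 0 := by rw [hFc x hx, hF0]
  have e2 : G x = g 0 / s := by rw [hGc x hx, hG0]
  have key : y x = F x * Complex.cos (s * x) + G x * Complex.sin (s * x) := by
    simp only [hF, hG]
    linear_combination -(y x) * (Complex.sin_sq_add_cos_sq (s * x))
  rw [key, e1, e2]

lemma trig_det' (u v : ℂ) :
    (Complex.cos (2*v) - 1) * Complex.sin (2*u) - (Complex.cos (2*u) - 1) * Complex.sin (2*v)
      = 4 * Complex.sin (u - v) * Complex.sin v * Complex.sin u := by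
  rw [Complex.cos_two_mul, Complex.sin_two_mul, Complex.cos_two_mul, Complex.sin_two_mul,
    Complex.sin_sub]
  linear_combination 4 * Complex.sin u * Complex.cos u * (Complex.sin_sq_add_cos_sq v)
    - 4 * Complex.sin v * Complex.cos v * (Complex.sin_sq_add_cos_sq u)

lemma trig_det (s α : ℂ) :
    (Complex.cos (s*α) - 1) * Complex.sin s - (Complex.cos s - 1) * Complex.sin (s*α)
      = 4 * Complex.sin (s*(1-α)/2) * Complex.sin (s*α/2) * Complex.sin (s/2) := by
  have h := trig_det' (s/2) (s*α/2)
  rw [show 2*(s*α/2) = s*α from by ring, show 2*(s/2) = s from by ring,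
    show s/2 - s*α/2 = s*(1-α)/2 from by ring] at h
  exact h

def Pa (α s : ℂ) : ℂ :=
  Complex.sin (s * (1 - α) / 2) * Complex.sin (s * α / 2) * Complex.sin (s / 2)

lemma Pa_neg (α s : ℂ) : Pa α (-s) = - Pa α s := by
  unfold Pa
  rw [show -s*(1-α)/2 = -(s*(1-α)/2) from by ring, show -s*α/2 = -(s*α/2) from by ring,
    show -s/2 = -(s/2) from by ring, Complex.sin_neg, Complex.sin_neg, Complex.sin_neg]
  ring

lemma eig_iff_P {a : ℝ} (ha : a ∈ Ioo (0:ℝ) 1) {s : ℂ} (hs : s ≠ 0) :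
    IsEigA a (s^2) ↔ Pa (a:ℂ) s = 0 := by
  have haI : a ∈ Icc (0:ℝ) 1 := ⟨ha.1.le, ha.2.le⟩
  have h0I : (0:ℝ) ∈ Icc (0:ℝ) 1 := ⟨le_refl 0, zero_le_one⟩
  have h1I : (1:ℝ) ∈ Icc (0:ℝ) 1 := ⟨zero_le_one, le_refl 1⟩
  constructor
  · rintro ⟨y, hsol, ⟨x₀, hx₀, hx₀ne⟩, hb1, hb2⟩
    set A : ℂ := y 0 with hA
    set B : ℂ := derivWithin y (Icc (0:ℝ) 1) 0 / s with hB
    have hrep := rep_sol hs hsol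
    have hy0 : y 0 = A := rfl
    have hya : y a = A * Complex.cos (s * a) + B * Complex.sin (s * a) := hrep a haI
    have hy1 : y 1 = A * Complex.cos s + B * Complex.sin s := by
      have := hrep 1 h1I
      simpa using this
    -- the two equations
    have eq1 : A * Complex.cos (s * a) + B * Complex.sin (s * a) = A := by
      rw [← hya, ← hb1]
    have eq2 : A * Complex.cos s + B * Complex.sin s = A := by
      rw [← hy1, ← hb2, ← hb1]
    -- nontriviality
    have hAB : A ≠ 0 ∨ B ≠ 0 := by
      by_contra hcon
      push_neg at hcon
      apply hx₀ne
      have hc1 : y 0 = 0 := hcon.1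
      have hc2 : derivWithin y (Icc (0:ℝ) 1) 0 / s = 0 := hcon.2
      rw [hrep x₀ hx₀, hc1, hc2]
      ring
    -- determinant vanishes
    have hD : (Complex.cos (s*(a:ℂ)) - 1) * Complex.sin s
        - (Complex.cos s - 1) * Complex.sin (s*(a:ℂ)) = 0 := by
      rcases hAB with hA0 | hB0
      · have : A * ((Complex.cos (s*(a:ℂ)) - 1) * Complex.sin s
            - (Complex.cos s - 1) * Complex.sin (s*(a:ℂ))) = 0 := by
          linear_combination Complex.sin s * eq1 - Complex.sin (s*(a:ℂ)) * eq2
        exact (mul_eq_zero.mp this).resolve_left hA0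
      · have : B * ((Complex.cos (s*(a:ℂ)) - 1) * Complex.sin s
            - (Complex.cos s - 1) * Complex.sin (s*(a:ℂ))) = 0 := by
          linear_combination (Complex.cos (s*(a:ℂ)) - 1) * eq2 - (Complex.cos s - 1) * eq1
        exact (mul_eq_zero.mp this).resolve_left hB0
    have h4 : (4:ℂ) * Pa (a:ℂ) s = 0 := by
      unfold Pa
      linear_combination hD - trig_det s (a:ℂ)
    have := (mul_eq_zero.mp h4).resolve_left (by norm_num)
    exact this
  · intro hP
    -- determinant is zero
    have hD : (Complex.cos (s*(a:ℂ)) - 1) * Complex.sin s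
        - (Complex.cos s - 1) * Complex.sin (s*(a:ℂ)) = 0 := by
      rw [trig_det s (a:ℂ)]
      unfold Pa at hP
      linear_combination 4 * hP
    -- find nontrivial kernel vector
    obtain ⟨v0, v1, hvne, ea, e1⟩ :
        ∃ v0 v1 : ℂ, (v0 ≠ 0 ∨ v1 ≠ 0) ∧
          v0 * Complex.cos (s*(a:ℂ)) + v1 * Complex.sin (s*(a:ℂ)) = v0 ∧
          v0 * Complex.cos s + v1 * Complex.sin s = v0 := by
      by_cases h1 : Complex.cos (s*(a:ℂ)) = 1 ∧ Complex.sin (s*(a:ℂ)) = 0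
      · by_cases h2 : Complex.cos s = 1 ∧ Complex.sin s = 0
        · exact ⟨1, 0, Or.inl one_ne_zero, by rw [h1.1]; ring, by rw [h2.1]; ring⟩
        · refine ⟨Complex.sin s, 1 - Complex.cos s, ?_, ?_, by ring⟩
          · rcases not_and_or.mp h2 with h | h
            · exact Or.inr (sub_ne_zero.mpr (Ne.symm h))
            · exact Or.inl h
          · rw [h1.1, h1.2]; ring
      · refine ⟨Complex.sin (s*(a:ℂ)), 1 - Complex.cos (s*(a:ℂ)), ?_, by ring, ?_⟩
        · rcases not_and_or.mp h1 with h | h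
          · exact Or.inr (sub_ne_zero.mpr (Ne.symm h))
          · exact Or.inl h
        · linear_combination -hD
    -- build eigenfunction
    refine ⟨fun x : ℝ => v0 * Complex.cos (s * x) + v1 * Complex.sin (s * x),
      isSolNeg_trig v0 v1 s, ?_, ?_, ?_⟩
    · -- nontriviality
      by_cases hv0 : v0 ≠ 0
      · exact ⟨0, h0I, by simpa using hv0⟩
      · push_neg at hv0
        have hv1 : v1 ≠ 0 := hvne.resolve_left (by simp [hv0])
        by_contra hcon
        push_neg at hcon
        have hU : UniqueDiffOn ℝ (Icc (0:ℝ) 1) := uniqueDiffOn_Icc zero_lt_one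
        have hd1 : HasDerivWithinAt
            (fun x : ℝ => v0 * Complex.cos (s * x) + v1 * Complex.sin (s * x))
            (s * (-v0 * Complex.sin (s * (0:ℝ)) + v1 * Complex.cos (s * (0:ℝ))))
            (Icc (0:ℝ) 1) 0 := (hda_trig v0 v1 s 0).hasDerivWithinAt
        have hd2 : HasDerivWithinAt
            (fun x : ℝ => v0 * Complex.cos (s * x) + v1 * Complex.sin (s * x))
            0 (Icc (0:ℝ) 1) 0 := by
          refine (hasDerivWithinAt_const (0:ℝ) (Icc (0:ℝ) 1) (0:ℂ)).congr
            (fun z hz => hcon z hz) (hcon 0 h0I)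
        have := (hd1.derivWithin (hU 0 h0I)).symm.trans (hd2.derivWithin (hU 0 h0I))
        simp at this
        rcases this with h | h
        · exact hs h
        · exact hv1 h
    · -- y 0 = y a
      simpa using ea.symm
    · -- y a = y 1
      simpa using ea.trans e1.symm

open Filter Topology in
lemma delta_zero (α : ℂ) (Δa : ℂ → ℂ) (hΔent : Differentiable ℂ Δa)
    (hΔval : ∀ lam : ℂ, lam ≠ 0 → ∀ s : ℂ, s ^ 2 = lam →
      Δa lam = -(4 / s) * Complex.sin (s * (1 - α) / 2) *
        Complex.sin (s * α / 2) * Complex.sin (s / 2)) :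
    Δa 0 = 0 := by
  have hsq : Tendsto (fun t : ℂ => t ^ 2) (𝓝[≠] (0:ℂ)) (𝓝 (0:ℂ)) :=
    ((continuous_pow 2).tendsto' (0:ℂ) 0 (by norm_num)).mono_left nhdsWithin_le_nhds
  have t1 : Tendsto (fun t : ℂ => Δa (t ^ 2)) (𝓝[≠] (0:ℂ)) (𝓝 (Δa 0)) :=
    (hΔent.continuous.continuousAt).tendsto.comp hsq
  -- the explicit formula on the punctured neighborhood
  have heq : ∀ t : ℂ, t ≠ 0 → Δa (t ^ 2) =
      (-4 * Complex.sin (t * (1 - α) / 2)) * Complex.sin (t * α / 2) *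
        (Complex.sin (t / 2) / t) := by
    intro t ht
    rw [hΔval (t ^ 2) (pow_ne_zero 2 ht) t rfl]
    field_simp
  -- limit of each factor
  have hs1 : Tendsto (fun t : ℂ => -4 * Complex.sin (t * (1 - α) / 2)) (𝓝[≠] (0:ℂ))
      (𝓝 (0:ℂ)) := by
    have : Continuous fun t : ℂ => -4 * Complex.sin (t * (1 - α) / 2) := by fun_prop
    exact (this.tendsto' (0:ℂ) 0 (by simp)).mono_left nhdsWithin_le_nhds
  have hs2 : Tendsto (fun t : ℂ => Complex.sin (t * α / 2)) (𝓝[≠] (0:ℂ)) (𝓝 (0:ℂ)) := by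
    have : Continuous fun t : ℂ => Complex.sin (t * α / 2) := by fun_prop
    exact (this.tendsto' (0:ℂ) 0 (by simp)).mono_left nhdsWithin_le_nhds
  have hs3 : Tendsto (fun t : ℂ => Complex.sin (t / 2) / t) (𝓝[≠] (0:ℂ))
      (𝓝 ((1:ℂ)/2)) := by
    have hd : HasDerivAt (fun t : ℂ => Complex.sin (t / 2)) ((1:ℂ)/2) 0 := by
      have := (Complex.hasDerivAt_sin ((0:ℂ)/2)).comp (0:ℂ)
        ((hasDerivAt_id (0:ℂ)).div_const 2)
      exact this.congr_deriv (by norm_num)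
    have hslope := hasDerivAt_iff_tendsto_slope.mp hd
    refine hslope.congr' ?_
    filter_upwards [self_mem_nhdsWithin] with t ht
    simp only [slope_def_field, Set.mem_compl_iff, Set.mem_singleton_iff] at *
    rw [show Complex.sin ((0:ℂ)/2) = 0 by simp]
    field_simp
    ring
  have t2 : Tendsto (fun t : ℂ => Δa (t ^ 2)) (𝓝[≠] (0:ℂ)) (𝓝 (0:ℂ)) := by
    have hprod := (hs1.mul hs2).mul hs3
    rw [show ((0:ℂ) * 0 * ((1:ℂ)/2)) = 0 by ring] at hprod
    refine hprod.congr' ?_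
    filter_upwards [self_mem_nhdsWithin] with t ht
    exact (heq t ht).symm
  exact tendsto_nhds_unique t1 t2

theorem stmt9 (a : ℝ) (ha : a ∈ Ioo (0:ℝ) 1)
    (Δa : ℂ → ℂ) (hΔent : Differentiable ℂ Δa)
    (hΔval : ∀ lam : ℂ, lam ≠ 0 → ∀ s : ℂ, s ^ 2 = lam →
      Δa lam = -(4 / s) * Complex.sin (s * (1 - (a : ℂ)) / 2) *
        Complex.sin (s * (a : ℂ) / 2) * Complex.sin (s / 2))
    (lam : ℂ) :
    (IsEigA a lam ↔ Δa lam = 0) ∧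
    (IsEigA a lam ↔ ∀ s : ℂ, s ^ 2 = lam →
      Complex.sin (s * (1 - (a : ℂ)) / 2) * Complex.sin (s * (a : ℂ) / 2) *
        Complex.sin (s / 2) = 0) := by
  by_cases hlam : lam = 0
  · subst hlam
    have heig : IsEigA a 0 := by
      refine ⟨fun x : ℝ => (1:ℂ) * Complex.cos (0 * x) + 0 * Complex.sin (0 * x), ?_, ?_, ?_, ?_⟩
      · have := isSolNeg_trig 1 0 0
        simpa using this
      · exact ⟨0, ⟨le_refl 0, zero_le_one⟩, by simp⟩
      · simp
      · simp
    have hΔ0 : Δa 0 = 0 := delta_zero (a:ℂ) Δa hΔent hΔval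
    refine ⟨⟨fun _ => hΔ0, fun _ => heig⟩, ⟨fun _ s hs => ?_, fun _ => heig⟩⟩
    · have hs0 : s = 0 := by
        have := pow_eq_zero_iff (n := 2) (by norm_num) |>.mp hs
        exact this
      subst hs0
      simp
  · -- lam ≠ 0
    set s₀ : ℂ := lam ^ ((2:ℕ):ℂ)⁻¹ with hs₀def
    have hs₀ : s₀ ^ 2 = lam := Complex.cpow_nat_inv_pow lam (by norm_num)
    have hs₀ne : s₀ ≠ 0 := by
      intro h
      apply hlam
      rw [← hs₀, h]
      ring
    have hkey : IsEigA a lam ↔ Pa (a:ℂ) s₀ = 0 := by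
      rw [← hs₀]
      exact eig_iff_P ha hs₀ne
    constructor
    · constructor
      · intro h
        have hP0 := hkey.mp h
        unfold Pa at hP0
        rw [hΔval lam hlam s₀ hs₀]
        linear_combination -(4/s₀) * hP0
      · intro hΔ
        apply hkey.mpr
        have hE := (hΔval lam hlam s₀ hs₀).symm.trans hΔ
        have h2 : -(4/s₀) * Pa (a:ℂ) s₀ = 0 := by
          unfold Pa
          linear_combination hE
        have h4 : -(4/s₀) ≠ 0 :=
          neg_ne_zero.mpr (div_ne_zero (by norm_num) hs₀ne)
        exact (mul_eq_zero.mp h2).resolve_left h4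
    · constructor
      · intro h s hs
        have hP0 := hkey.mp h
        have hss : (s - s₀) * (s + s₀) = 0 := by
          linear_combination hs - hs₀
        rcases mul_eq_zero.mp hss with h1 | h1
        · have hse : s = s₀ := sub_eq_zero.mp h1
          unfold Pa at hP0
          rw [hse]
          exact hP0
        · have hse : s = -s₀ := eq_neg_of_add_eq_zero_left h1
          have h2 : Pa (a:ℂ) s = 0 := by rw [hse, Pa_neg, hP0, neg_zero]
          unfold Pa at h2
          exact h2
      · intro h
        exact hkey.mpr (h s₀ hs₀)
end
end

section
/- Fix a ∈ (0,1) and let λ̂ ∈ ℂ with λ̂ ≠ 0. Then Δ_a(λ̂) = 0 and Δ_a'(λ̂) = 0 hold simultaneously if and only if there exist positive integers m, n, l such that λ̂ = (2mπ)² = (2nπ/a)² = (2lπ/(1−a))². -/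
open Set Complex

noncomputable section

def gfun (a : ℝ) : ℂ → ℂ := fun z =>
  -4 * (Complex.sin (z * (1 - (a:ℂ)) / 2) * Complex.sin (z * (a:ℂ) / 2) * Complex.sin (z / 2))

def gdfun (a : ℝ) : ℂ → ℂ := fun z =>
  -4 * ( ((1 - (a:ℂ))/2) * Complex.cos (z * (1 - (a:ℂ)) / 2) * Complex.sin (z * (a:ℂ) / 2) * Complex.sin (z / 2)
       + ((a:ℂ)/2) * Complex.sin (z * (1 - (a:ℂ)) / 2) * Complex.cos (z * (a:ℂ) / 2) * Complex.sin (z / 2)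
       + (1/2) * Complex.sin (z * (1 - (a:ℂ)) / 2) * Complex.sin (z * (a:ℂ) / 2) * Complex.cos (z / 2) )

lemma hasDerivAt_gfun (a : ℝ) (z : ℂ) : HasDerivAt (gfun a) (gdfun a z) z := by
  have hlin : ∀ c : ℂ, HasDerivAt (fun w : ℂ => w * c / 2) (c / 2) z := by
    intro c
    simpa using ((hasDerivAt_id z).mul_const c).div_const 2
  have hA : HasDerivAt (fun w : ℂ => Complex.sin (w * (1 - (a:ℂ)) / 2))
      (Complex.cos (z * (1 - (a:ℂ)) / 2) * ((1 - (a:ℂ)) / 2)) z :=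
    (Complex.hasDerivAt_sin _).comp z (hlin _)
  have hB : HasDerivAt (fun w : ℂ => Complex.sin (w * (a:ℂ) / 2))
      (Complex.cos (z * (a:ℂ) / 2) * ((a:ℂ) / 2)) z :=
    (Complex.hasDerivAt_sin _).comp z (hlin _)
  have hC : HasDerivAt (fun w : ℂ => Complex.sin (w / 2))
      (Complex.cos (z / 2) * (1 / 2)) z := by
    have : HasDerivAt (fun w : ℂ => w / 2) (1/2 : ℂ) z := by
      simpa using (hasDerivAt_id z).div_const 2
    exact (Complex.hasDerivAt_sin _).comp z this
  have : HasDerivAt (fun w : ℂ => -4 * (Complex.sin (w * (1 - (a:ℂ)) / 2) * Complex.sin (w * (a:ℂ) / 2) * Complex.sin (w / 2))) _ z :=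
    (((hA.mul hB).mul hC)).const_mul (-4 : ℂ)
  convert this using 1
  · rfl
  simp only [gdfun, Pi.mul_apply]
  ring

lemma trig_key (a : ℝ) (ha0 : 0 < a) (ha1 : a < 1) (z : ℂ)
    (h0 : Complex.sin (z * (1 - (a:ℂ)) / 2) * Complex.sin (z * (a:ℂ) / 2) * Complex.sin (z / 2) = 0)
    (h1 : ((1 - (a:ℂ))/2) * Complex.cos (z * (1 - (a:ℂ)) / 2) * Complex.sin (z * (a:ℂ) / 2) * Complex.sin (z / 2)
       + ((a:ℂ)/2) * Complex.sin (z * (1 - (a:ℂ)) / 2) * Complex.cos (z * (a:ℂ) / 2) * Complex.sin (z / 2)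
       + (1/2) * Complex.sin (z * (1 - (a:ℂ)) / 2) * Complex.sin (z * (a:ℂ) / 2) * Complex.cos (z / 2) = 0) :
    Complex.sin (z * (1 - (a:ℂ)) / 2) = 0 ∧ Complex.sin (z * (a:ℂ) / 2) = 0 ∧ Complex.sin (z / 2) = 0 := by
  set A := z * (1 - (a:ℂ)) / 2 with hAdef
  set B := z * (a:ℂ) / 2 with hBdef
  have hsum : z / 2 = A + B := by rw [hAdef, hBdef]; ring
  have hCsin : Complex.sin (z / 2) = Complex.sin A * Complex.cos B + Complex.cos A * Complex.sin B := by
    rw [hsum, Complex.sin_add]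
  have hane : (a:ℂ) ≠ 0 := by exact_mod_cast ha0.ne'
  have h1ane : (1 - (a:ℂ)) ≠ 0 := by
    have : (a:ℂ) ≠ 1 := by exact_mod_cast ha1.ne
    intro h; apply this; linear_combination -h
  have hcosne : ∀ w : ℂ, Complex.sin w = 0 → Complex.cos w ≠ 0 := by
    intro w hw hc
    have := Complex.sin_sq_add_cos_sq w
    rw [hw, hc] at this
    simp at this
  rcases mul_eq_zero.1 h0 with h | hC
  · rcases mul_eq_zero.1 h with hA | hB
    · -- sin A = 0
      have hcA := hcosne A hA
      rw [hA] at h1 hCsin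
      simp only [mul_zero, zero_mul, zero_add, add_zero] at h1 hCsin
      -- h1 : (1-a)/2 * cos A * sin B * sin (z/2) = 0
      have : Complex.sin B * Complex.sin (z/2) = 0 := by
        have h2 : (((1 - (a:ℂ))/2) * Complex.cos A) * (Complex.sin B * Complex.sin (z/2)) = 0 := by
          linear_combination h1
        rcases mul_eq_zero.1 h2 with h | h
        · exact absurd h (mul_ne_zero (by simpa using h1ane) hcA)
        · exact h
      rcases mul_eq_zero.1 this with hB | hC
      · exact ⟨hA, hB, by rw [hCsin, hB]; ring⟩
      · refine ⟨hA, ?_, hC⟩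
        rw [hC] at hCsin
        rcases mul_eq_zero.1 hCsin.symm with h | h
        · exact absurd h hcA
        · exact h
    · -- sin B = 0
      have hcB := hcosne B hB
      rw [hB] at h1 hCsin
      simp only [mul_zero, zero_mul, zero_add, add_zero] at h1 hCsin
      have : Complex.sin A * Complex.sin (z/2) = 0 := by
        have h2 : (((a:ℂ)/2) * Complex.cos B) * (Complex.sin A * Complex.sin (z/2)) = 0 := by
          linear_combination h1
        rcases mul_eq_zero.1 h2 with h | h
        · exact absurd h (mul_ne_zero (by simpa using hane) hcB)
        · exact h
      rcases mul_eq_zero.1 this with hA | hC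
      · exact ⟨hA, hB, by rw [hCsin, hA]; ring⟩
      · refine ⟨?_, hB, hC⟩
        rw [hC] at hCsin
        rcases mul_eq_zero.1 hCsin.symm with h | h
        · exact h
        · exact absurd h hcB
  · -- sin (z/2) = 0
    have hcC := hcosne _ hC
    rw [hC] at h1
    simp only [mul_zero, zero_mul, zero_add, add_zero] at h1
    have : Complex.sin A * Complex.sin B = 0 := by
      have h2 : ((1/2 : ℂ) * Complex.cos (z/2)) * (Complex.sin A * Complex.sin B) = 0 := by
        linear_combination h1
      rcases mul_eq_zero.1 h2 with h | h
      · exact absurd h (mul_ne_zero (by norm_num) hcC)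
      · exact h
    rw [hC] at hCsin
    rcases mul_eq_zero.1 this with hA | hB
    · refine ⟨hA, ?_, hC⟩
      rw [hA] at hCsin
      simp only [zero_mul, zero_add] at hCsin
      rcases mul_eq_zero.1 hCsin.symm with h | h
      · exact absurd h (hcosne A hA)
      · exact h
    · refine ⟨?_, hB, hC⟩
      rw [hB] at hCsin
      simp only [mul_zero, add_zero] at hCsin
      rcases mul_eq_zero.1 hCsin.symm with h | h
      · exact h
      · exact absurd h (hcosne B hB)


theorem stmt10 (a : ℝ) (ha : a ∈ Ioo (0:ℝ) 1)
    (Δa : ℂ → ℂ) (hΔent : Differentiable ℂ Δa)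
    (hΔval : ∀ lam : ℂ, lam ≠ 0 → ∀ s : ℂ, s ^ 2 = lam →
      Δa lam = -(4 / s) * Complex.sin (s * (1 - (a : ℂ)) / 2) *
        Complex.sin (s * (a : ℂ) / 2) * Complex.sin (s / 2))
    (lamh : ℂ) (hlamh : lamh ≠ 0) :
    (Δa lamh = 0 ∧ deriv Δa lamh = 0) ↔
      ∃ m n l : ℕ, 0 < m ∧ 0 < n ∧ 0 < l ∧
        lamh = ((2 * (m : ℝ) * Real.pi : ℝ) : ℂ) ^ 2 ∧
        lamh = ((2 * (n : ℝ) * Real.pi / a : ℝ) : ℂ) ^ 2 ∧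
        lamh = ((2 * (l : ℝ) * Real.pi / (1 - a) : ℝ) : ℂ) ^ 2 := by
  obtain ⟨ha0, ha1⟩ := ha
  set s₀ : ℂ := Complex.exp (Complex.log lamh / 2) with hs₀def
  have hs₀sq : s₀ ^ 2 = lamh := by
    rw [hs₀def, pow_two, ← Complex.exp_add]
    rw [show Complex.log lamh / 2 + Complex.log lamh / 2 = Complex.log lamh by ring]
    exact Complex.exp_log hlamh
  have hs₀ne : s₀ ≠ 0 := Complex.exp_ne_zero _
  -- the local square root branch
  set sfun : ℂ → ℂ := fun lam => s₀ * Complex.exp (Complex.log (lam / lamh) / 2) with hsfdef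
  have hsval : sfun lamh = s₀ := by
    simp [hsfdef, div_self hlamh]
  have hsder : HasDerivAt sfun (s₀ / (2 * lamh)) lamh := by
    have hdiv : HasDerivAt (fun lam : ℂ => lam / lamh) lamh⁻¹ lamh := by
      simpa [one_div] using (hasDerivAt_id lamh).div_const lamh
    have hcomp : HasDerivAt (fun lam : ℂ => Complex.log (lam / lamh)) lamh⁻¹ lamh := by
      have := hdiv.clog (by rw [div_self hlamh]; exact Complex.one_mem_slitPlane)
      rw [div_self hlamh] at this
      simpa using this
    have h2 : HasDerivAt (fun lam : ℂ => Complex.log (lam / lamh) / 2) (lamh⁻¹ / 2) lamh :=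
      hcomp.div_const 2
    have h3 : HasDerivAt (fun lam : ℂ => Complex.exp (Complex.log (lam / lamh) / 2))
        (Complex.exp (Complex.log (lamh / lamh) / 2) * (lamh⁻¹ / 2)) lamh :=
      (Complex.hasDerivAt_exp _).comp lamh h2
    have h4 := h3.const_mul s₀
    rw [div_self hlamh] at h4
    simp only [Complex.log_one, zero_div, Complex.exp_zero, one_mul] at h4
    have he : s₀ * (lamh⁻¹ / 2) = s₀ / (2 * lamh) := by
      field_simp
    rw [he] at h4
    exact h4
  -- local expression of Δa near lamh
  have hev : Δa =ᶠ[nhds lamh] fun lam => gfun a (sfun lam) / sfun lam := by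
    filter_upwards [eventually_ne_nhds hlamh] with lam hne
    have hexpne : Complex.exp (Complex.log (lam / lamh) / 2) ≠ 0 := Complex.exp_ne_zero _
    have hsq : (sfun lam) ^ 2 = lam := by
      rw [hsfdef]
      simp only
      rw [mul_pow, hs₀sq, pow_two, ← Complex.exp_add]
      rw [show Complex.log (lam / lamh) / 2 + Complex.log (lam / lamh) / 2
            = Complex.log (lam / lamh) by ring]
      rw [Complex.exp_log (div_ne_zero hne hlamh)]
      field_simp
    rw [hΔval lam hne (sfun lam) hsq]
    simp only [gfun]
    ring
  have hΔeq : Δa lamh = gfun a s₀ / s₀ := by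
    rw [hΔval lamh hlamh s₀ hs₀sq]
    simp only [gfun]
    ring
  have hFder : HasDerivAt (fun lam => gfun a (sfun lam) / sfun lam)
      ((gdfun a s₀ * (s₀ / (2 * lamh)) * s₀ - gfun a s₀ * (s₀ / (2 * lamh))) / s₀ ^ 2) lamh := by
    have hcomp : HasDerivAt (fun lam => gfun a (sfun lam))
        (gdfun a s₀ * (s₀ / (2 * lamh))) lamh := by
      have := (hasDerivAt_gfun a (sfun lamh)).comp lamh hsder
      rw [hsval] at this
      exact this
    have h := hcomp.div hsder (by rw [hsval]; exact hs₀ne)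
    rw [hsval] at h
    exact h
  have hderiv : deriv Δa lamh
      = (gdfun a s₀ * (s₀ / (2 * lamh)) * s₀ - gfun a s₀ * (s₀ / (2 * lamh))) / s₀ ^ 2 := by
    rw [hev.deriv_eq]
    exact hFder.deriv
  have hπC : (Real.pi : ℂ) ≠ 0 := by exact_mod_cast Real.pi_ne_zero
  have haC : (a : ℂ) ≠ 0 := by exact_mod_cast ha0.ne'
  have h1aC : (1 : ℂ) - (a : ℂ) ≠ 0 := by
    intro h
    have h' : (a:ℂ) = 1 := by linear_combination -h
    have : a = (1:ℝ) := by exact_mod_cast h'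
    linarith
  constructor
  · rintro ⟨h0, h1⟩
    have hg0 : gfun a s₀ = 0 := by
      rw [hΔeq] at h0
      exact (div_eq_zero_iff.1 h0).resolve_right hs₀ne
    have hgd0 : gdfun a s₀ = 0 := by
      rw [hderiv, hg0] at h1
      simp only [zero_mul, sub_zero] at h1
      have hnum := (div_eq_zero_iff.1 h1).resolve_right (pow_ne_zero 2 hs₀ne)
      have hs' : s₀ / (2 * lamh) ≠ 0 :=
        div_ne_zero hs₀ne (by simp [hlamh])
      rcases mul_eq_zero.1 hnum with h | h
      · rcases mul_eq_zero.1 h with h' | h'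
        · exact h'
        · exact absurd h' hs'
      · exact absurd h hs₀ne
    have h0' : Complex.sin (s₀ * (1 - (a:ℂ)) / 2) * Complex.sin (s₀ * (a:ℂ) / 2)
        * Complex.sin (s₀ / 2) = 0 := by
      simp only [gfun] at hg0
      have := mul_eq_zero.1 hg0
      rcases this with h | h
      · norm_num at h
      · exact h
    have h1' : ((1 - (a:ℂ))/2) * Complex.cos (s₀ * (1 - (a:ℂ)) / 2) * Complex.sin (s₀ * (a:ℂ) / 2) * Complex.sin (s₀ / 2)
       + ((a:ℂ)/2) * Complex.sin (s₀ * (1 - (a:ℂ)) / 2) * Complex.cos (s₀ * (a:ℂ) / 2) * Complex.sin (s₀ / 2)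
       + (1/2) * Complex.sin (s₀ * (1 - (a:ℂ)) / 2) * Complex.sin (s₀ * (a:ℂ) / 2) * Complex.cos (s₀ / 2) = 0 := by
      simp only [gdfun] at hgd0
      rcases mul_eq_zero.1 hgd0 with h | h
      · norm_num at h
      · exact h
    obtain ⟨hA, hB, hC⟩ := trig_key a ha0 ha1 s₀ h0' h1'
    rw [Complex.sin_eq_zero_iff] at hA hB hC
    obtain ⟨i, hi⟩ := hA
    obtain ⟨j, hj⟩ := hB
    obtain ⟨k, hk⟩ := hC
    have hs₀eq : s₀ = 2 * (k:ℂ) * (Real.pi:ℂ) := by linear_combination 2 * hk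
    have hkne : (k:ℂ) ≠ 0 := by
      intro h
      apply hs₀ne
      rw [hs₀eq, h]
      ring
    have hk0 : k ≠ 0 := by exact_mod_cast hkne
    have hj' : (k:ℂ) * (a:ℂ) = (j:ℂ) := by
      have h2 : (k:ℂ) * (a:ℂ) * (Real.pi:ℂ) = (j:ℂ) * (Real.pi:ℂ) := by
        linear_combination hj - (a:ℂ) * hk + (a:ℂ) * hk - hj + hj - (a:ℂ) * hk
      exact mul_right_cancel₀ hπC h2
    have hi' : (k:ℂ) * (1 - (a:ℂ)) = (i:ℂ) := by
      have h2 : (k:ℂ) * (1 - (a:ℂ)) * (Real.pi:ℂ) = (i:ℂ) * (Real.pi:ℂ) := by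
        linear_combination hi - (1 - (a:ℂ)) * hk
      exact mul_right_cancel₀ hπC h2
    have hjR : (k:ℝ) * a = (j:ℝ) := by exact_mod_cast hj'
    have hiR : (k:ℝ) * (1 - a) = (i:ℝ) := by exact_mod_cast hi'
    have hkR : (k:ℝ) ≠ 0 := by exact_mod_cast hk0
    have hj0 : j ≠ 0 := by
      intro h
      rw [h] at hjR
      simp at hjR
      rcases hjR with h' | h'
      · exact hkR (by exact_mod_cast h')
      · exact ha0.ne' h'
    have hi0 : i ≠ 0 := by
      intro h
      rw [h] at hiR
      simp at hiR
      rcases hiR with h' | h'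
      · exact hkR (by exact_mod_cast h')
      · linarith
    have hk2 : ((k.natAbs : ℕ) : ℂ) ^ 2 = (k:ℂ) ^ 2 := by
      have hZC := congrArg (fun t : ℤ => (t:ℂ)) (Int.natAbs_sq k)
      push_cast at hZC
      rw [show ((k.natAbs : ℕ) : ℂ) = (((k.natAbs : ℤ)) : ℂ) from (Int.cast_natCast k.natAbs).symm, ← Int.abs_eq_natAbs]
      exact hZC
    have hj2 : ((j.natAbs : ℕ) : ℂ) ^ 2 = (j:ℂ) ^ 2 := by
      have hZC := congrArg (fun t : ℤ => (t:ℂ)) (Int.natAbs_sq j)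
      push_cast at hZC
      rw [show ((j.natAbs : ℕ) : ℂ) = (((j.natAbs : ℤ)) : ℂ) from (Int.cast_natCast j.natAbs).symm, ← Int.abs_eq_natAbs]
      exact hZC
    have hi2 : ((i.natAbs : ℕ) : ℂ) ^ 2 = (i:ℂ) ^ 2 := by
      have hZC := congrArg (fun t : ℤ => (t:ℂ)) (Int.natAbs_sq i)
      push_cast at hZC
      rw [show ((i.natAbs : ℕ) : ℂ) = (((i.natAbs : ℤ)) : ℂ) from (Int.cast_natCast i.natAbs).symm, ← Int.abs_eq_natAbs]
      exact hZC
    refine ⟨k.natAbs, j.natAbs, i.natAbs, Int.natAbs_pos.2 hk0, Int.natAbs_pos.2 hj0,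
      Int.natAbs_pos.2 hi0, ?_, ?_, ?_⟩
    · rw [← hs₀sq, hs₀eq]
      push_cast
      linear_combination (-(4 * (Real.pi:ℂ)^2)) * hk2
    · rw [← hs₀sq]
      have hsa : s₀ * (a:ℂ) = 2 * (j:ℂ) * (Real.pi:ℂ) := by linear_combination 2 * hj
      push_cast
      rw [div_pow, eq_div_iff (pow_ne_zero 2 haC)]
      linear_combination (s₀ * (a:ℂ) + 2 * (j:ℂ) * (Real.pi:ℂ)) * hsa
        - (4 * (Real.pi:ℂ)^2) * hj2
    · rw [← hs₀sq]
      have hsa : s₀ * (1 - (a:ℂ)) = 2 * (i:ℂ) * (Real.pi:ℂ) := by linear_combination 2 * hi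
      push_cast
      rw [div_pow, eq_div_iff (pow_ne_zero 2 h1aC)]
      linear_combination (s₀ * (1 - (a:ℂ)) + 2 * (i:ℂ) * (Real.pi:ℂ)) * hsa
        - (4 * (Real.pi:ℂ)^2) * hi2
  · rintro ⟨m, n, l, hm, hn, hl, e1, e2, e3⟩
    have hπ := Real.pi_pos
    have hmR : (0:ℝ) < m := by exact_mod_cast hm
    have hnR : (0:ℝ) < n := by exact_mod_cast hn
    have hlR : (0:ℝ) < l := by exact_mod_cast hl
    have q2 : (2 * (m:ℝ) * Real.pi) ^ 2 = (2 * (n:ℝ) * Real.pi / a) ^ 2 := by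
      have := e1.symm.trans e2
      exact_mod_cast this
    have q3 : (2 * (m:ℝ) * Real.pi) ^ 2 = (2 * (l:ℝ) * Real.pi / (1 - a)) ^ 2 := by
      have := e1.symm.trans e3
      exact_mod_cast this
    have hx : (0:ℝ) < 2 * (m:ℝ) * Real.pi := by positivity
    have hy : (0:ℝ) < 2 * (n:ℝ) * Real.pi / a := by positivity
    have hz : (0:ℝ) < 2 * (l:ℝ) * Real.pi / (1 - a) := by
      have h1a : (0:ℝ) < 1 - a := by linarith
      positivity
    have E2 : 2 * (m:ℝ) * Real.pi = 2 * (n:ℝ) * Real.pi / a := by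
      nlinarith [q2, hx, hy]
    have E3 : 2 * (m:ℝ) * Real.pi = 2 * (l:ℝ) * Real.pi / (1 - a) := by
      nlinarith [q3, hx, hz]
    have hma : (m:ℝ) * a = n := by
      have E2' : 2 * (m:ℝ) * Real.pi * a = 2 * (n:ℝ) * Real.pi := by
        rw [E2]
        field_simp
      have h2' : (2 * Real.pi) * ((m:ℝ) * a) = (2 * Real.pi) * (n:ℝ) := by
        linear_combination E2'
      exact mul_left_cancel₀ (by positivity) h2'
    have hml : (m:ℝ) * (1 - a) = l := by
      have h1a : (1:ℝ) - a ≠ 0 := by linarith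
      have E3' : 2 * (m:ℝ) * Real.pi * (1 - a) = 2 * (l:ℝ) * Real.pi := by
        rw [E3]
        field_simp
      have h2' : (2 * Real.pi) * ((m:ℝ) * (1 - a)) = (2 * Real.pi) * (l:ℝ) := by
        linear_combination E3'
      exact mul_left_cancel₀ (by positivity) h2'
    have hmaC : (m:ℂ) * (a:ℂ) = (n:ℂ) := by exact_mod_cast hma
    have hmlC : (m:ℂ) * (1 - (a:ℂ)) = (l:ℂ) := by
      have : ((m * (1 - a) : ℝ) : ℂ) = ((l:ℝ) : ℂ) := by exact_mod_cast hml
      push_cast at this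
      exact_mod_cast this
    have hfact : (s₀ - 2 * (m:ℂ) * (Real.pi:ℂ)) * (s₀ + 2 * (m:ℂ) * (Real.pi:ℂ)) = 0 := by
      have e1' : lamh = (2 * (m:ℂ) * (Real.pi:ℂ)) ^ 2 := by
        rw [e1]; push_cast; ring
      linear_combination hs₀sq + e1'
    obtain ⟨ε, hε1, hs₀c⟩ : ∃ ε : ℤ, (ε = 1 ∨ ε = -1) ∧ s₀ = (ε:ℂ) * (2 * (m:ℂ) * (Real.pi:ℂ)) := by
      rcases mul_eq_zero.1 hfact with h | h
      · exact ⟨1, Or.inl rfl, by push_cast; linear_combination h⟩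
      · exact ⟨-1, Or.inr rfl, by push_cast; linear_combination h⟩
    have hA : Complex.sin (s₀ * (1 - (a:ℂ)) / 2) = 0 := by
      rw [Complex.sin_eq_zero_iff]
      exact ⟨ε * l, by push_cast; rw [hs₀c]; linear_combination (ε:ℂ) * (Real.pi:ℂ) * hmlC⟩
    have hB : Complex.sin (s₀ * (a:ℂ) / 2) = 0 := by
      rw [Complex.sin_eq_zero_iff]
      exact ⟨ε * n, by push_cast; rw [hs₀c]; linear_combination (ε:ℂ) * (Real.pi:ℂ) * hmaC⟩
    have hC : Complex.sin (s₀ / 2) = 0 := by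
      rw [Complex.sin_eq_zero_iff]
      exact ⟨ε * m, by push_cast; rw [hs₀c]; ring⟩
    have hg0 : gfun a s₀ = 0 := by
      simp only [gfun]
      rw [hC]
      ring
    have hgd0 : gdfun a s₀ = 0 := by
      simp only [gdfun]
      rw [hA, hB, hC]
      ring
    constructor
    · rw [hΔeq, hg0, zero_div]
    · rw [hderiv, hg0, hgd0]
      simp
end
end

section
/- Fix a ∈ (0,1). If λ̂ ∈ ℂ with λ̂ ≠ 0 satisfies Δ_a(λ̂) = 0 and Δ_a'(λ̂) = 0, then Δ_a''(λ̂) = 0 and Δ_a'''(λ̂) = 3(a² − a)/(8λ̂²), which is nonzero. Moreover, Δ_a(0) = 0 and Δ_a'(0) = a(a − 1)/2 ≠ 0. -/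
open Set

section helpers

lemma trigid (x y : ℂ) : Complex.sin (2*(x+y)) - Complex.sin (2*x) - Complex.sin (2*y)
    = -4 * Complex.sin y * Complex.sin x * Complex.sin (x+y) := by
  rw [Complex.sin_two_mul, Complex.sin_two_mul, Complex.sin_two_mul, Complex.sin_add,
    Complex.cos_add]
  linear_combination (2*Complex.sin x*Complex.cos x) * (Complex.sin_sq_add_cos_sq y)
    + (2*Complex.sin y*Complex.cos y) * (Complex.sin_sq_add_cos_sq x)

lemma trigkey (a s : ℂ) : Complex.sin s - Complex.sin (a*s) - Complex.sin ((1-a)*s)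
    = -4 * Complex.sin (s*(1-a)/2) * Complex.sin (s*a/2) * Complex.sin (s/2) := by
  have h := trigid (s*a/2) (s*(1-a)/2)
  rw [show (2:ℂ)*((s*a/2)+(s*(1-a)/2)) = s by ring, show (2:ℂ)*(s*a/2) = a*s by ring,
    show (2:ℂ)*(s*(1-a)/2) = (1-a)*s by ring, show s*a/2 + s*(1-a)/2 = s/2 by ring] at h
  exact h

lemma hasDerivAt_id_mul (f : ℂ → ℂ) (f' s : ℂ) (hf : HasDerivAt f f' s) :
    HasDerivAt (fun z => z * f z) (f s + s * f') s := by
  have h := (hasDerivAt_id s).mul hf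
  simp at h
  exact h

lemma hasDerivAt_sin_mul (c s : ℂ) :
    HasDerivAt (fun z => Complex.sin (c*z)) (c * Complex.cos (c*s)) s := by
  have h := (Complex.hasDerivAt_sin (c*s)).comp s ((hasDerivAt_id s).const_mul c)
  simpa [Function.comp_def, mul_comm] using h

lemma hasDerivAt_cos_mul (c s : ℂ) :
    HasDerivAt (fun z => Complex.cos (c*z)) (-(c * Complex.sin (c*s))) s := by
  have h := (Complex.hasDerivAt_cos (c*s)).comp s ((hasDerivAt_id s).const_mul c)
  simpa [Function.comp_def, mul_comm] using h

lemma aux2 (a s : ℂ) (ha0 : a ≠ 0) (ha1 : 1 - a ≠ 0)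
    (h0 : Complex.sin (s*(1-a)/2) * Complex.sin (s*a/2) * Complex.sin (s/2) = 0)
    (h1 : Complex.cos s - a * Complex.cos (a*s) - (1-a) * Complex.cos ((1-a)*s) = 0) :
    Complex.sin (a*s) = 0 ∧ Complex.sin ((1-a)*s) = 0 ∧ Complex.sin s = 0 ∧
    Complex.cos (a*s) = 1 ∧ Complex.cos ((1-a)*s) = 1 ∧ Complex.cos s = 1 := by
  set x := s*a/2 with hx
  set y := s*(1-a)/2 with hy
  have exs : a*s = 2*x := by rw [hx]; ring
  have eys : (1-a)*s = 2*y := by rw [hy]; ring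
  have es : s = 2*(x+y) := by rw [hx, hy]; ring
  have es2 : s/2 = x+y := by rw [hx, hy]; ring
  rw [es2, Complex.sin_add] at h0
  rw [exs, eys, Complex.cos_two_mul, Complex.cos_two_mul] at h1
  nth_rewrite 1 [es] at h1
  rw [Complex.cos_two_mul, Complex.cos_add] at h1
  have pyx := Complex.sin_sq_add_cos_sq x
  have pyy := Complex.sin_sq_add_cos_sq y
  have hmain : Complex.sin x = 0 ∧ Complex.sin y = 0 := by
    rcases mul_eq_zero.mp h0 with h | hC
    · rcases mul_eq_zero.mp h with hsy | hsx
      · have hx2 : (1-a) * Complex.sin x ^ 2 = 0 := by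
          linear_combination (-1/2 : ℂ)*h1 + (Complex.cos x^2-(1-a))*pyy + (1-a)*pyx
            - (Complex.sin y*(Complex.cos x^2 - Complex.sin x^2 - (1-a))
              + 2*Complex.cos y*Complex.cos x*Complex.sin x)*hsy
        have := (mul_eq_zero.mp hx2).resolve_left ha1
        exact ⟨pow_eq_zero_iff two_ne_zero |>.mp this, hsy⟩
      · have hy2 : a * Complex.sin y ^ 2 = 0 := by
          linear_combination (-1/2 : ℂ)*h1 + (Complex.cos y^2-a)*pyx + a*pyy
            - (Complex.sin x*(Complex.cos y^2 - Complex.sin y^2 - a)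
              + 2*Complex.cos x*Complex.cos y*Complex.sin y)*hsx
        have := (mul_eq_zero.mp hy2).resolve_left ha0
        exact ⟨hsx, pow_eq_zero_iff two_ne_zero |>.mp this⟩
    · have hsx2 : Complex.sin x ^ 2 = 0 := by
        linear_combination (1/2 : ℂ)*h1
          + ((Complex.sin x*Complex.cos y + Complex.cos x*Complex.sin y)
             + (1-a)*(Complex.sin x*Complex.cos y - Complex.cos x*Complex.sin y))*hC
          + (-(1-a) - (Complex.sin y^2 + Complex.cos y^2 - 1) + (1-a)*Complex.sin y^2)*pyx
          + (-a - (1-a)*Complex.sin x^2)*pyy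
      have hsx : Complex.sin x = 0 := pow_eq_zero_iff two_ne_zero |>.mp hsx2
      have hsy : Complex.sin y = 0 := by
        linear_combination Complex.cos x*hC - Complex.sin y*pyx
          + (Complex.sin y*Complex.sin x - Complex.cos x*Complex.cos y)*hsx
      exact ⟨hsx, hsy⟩
  obtain ⟨hsx, hsy⟩ := hmain
  have hcx2 : Complex.cos x ^ 2 = 1 := by linear_combination pyx - Complex.sin x*hsx
  have hcy2 : Complex.cos y ^ 2 = 1 := by linear_combination pyy - Complex.sin y*hsy
  refine ⟨?_, ?_, ?_, ?_, ?_, ?_⟩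
  · rw [exs, Complex.sin_two_mul, hsx]; ring
  · rw [eys, Complex.sin_two_mul, hsy]; ring
  · rw [es, Complex.sin_two_mul, Complex.sin_add, hsx, hsy]; ring
  · rw [exs, Complex.cos_two_mul]; linear_combination 2*hcx2
  · rw [eys, Complex.cos_two_mul]; linear_combination 2*hcy2
  · rw [es, Complex.cos_two_mul, Complex.cos_add, hsx, hsy]
    linear_combination 2*Complex.cos y^2*hcx2 + 2*hcy2

end helpers

noncomputable section

theorem stmt11 (a : ℝ) (ha : a ∈ Ioo (0:ℝ) 1)
    (Δa : ℂ → ℂ) (hΔent : Differentiable ℂ Δa)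
    (hΔval : ∀ lam : ℂ, lam ≠ 0 → ∀ s : ℂ, s ^ 2 = lam →
      Δa lam = -(4 / s) * Complex.sin (s * (1 - (a : ℂ)) / 2) *
        Complex.sin (s * (a : ℂ) / 2) * Complex.sin (s / 2)) :
    (∀ lamh : ℂ, lamh ≠ 0 → Δa lamh = 0 → deriv Δa lamh = 0 →
      iteratedDeriv 2 Δa lamh = 0 ∧
      iteratedDeriv 3 Δa lamh = 3 * ((a : ℂ) ^ 2 - (a : ℂ)) / (8 * lamh ^ 2) ∧
      iteratedDeriv 3 Δa lamh ≠ 0) ∧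
    Δa 0 = 0 ∧ deriv Δa 0 = (a : ℂ) * ((a : ℂ) - 1) / 2 ∧ deriv Δa 0 ≠ 0 := by
  obtain ⟨ha0', ha1'⟩ := ha
  have hA0 : (a:ℂ) ≠ 0 := Complex.ofReal_ne_zero.mpr (ne_of_gt ha0')
  have hA1 : 1 - (a:ℂ) ≠ 0 := by
    have h : ((1 - a : ℝ) : ℂ) ≠ 0 := Complex.ofReal_ne_zero.mpr (by linarith)
    push_cast at h; exact h
  have hAm1 : (a:ℂ) - 1 ≠ 0 := by
    intro h; apply hA1; linear_combination -h
  -- smoothness chain for Δa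
  have hAn : AnalyticOnNhd ℂ Δa Set.univ := fun z _ => hΔent.analyticAt z
  have hAn1 : AnalyticOnNhd ℂ (deriv Δa) Set.univ := hAn.deriv
  have hAn2 : AnalyticOnNhd ℂ (deriv (deriv Δa)) Set.univ := hAn1.deriv
  have hd1 : Differentiable ℂ (deriv Δa) := fun z => (hAn1 z trivial).differentiableAt
  have hd2 : Differentiable ℂ (deriv (deriv Δa)) := fun z => (hAn2 z trivial).differentiableAt
  -- g = Δa ∘ squaring
  set g : ℂ → ℂ := fun s => Δa (s^2) with hgdef
  have hgdiff : Differentiable ℂ g := hΔent.comp (differentiable_pow 2)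
  have hgAn : AnalyticOnNhd ℂ g Set.univ := fun z _ => hgdiff.analyticAt z
  have hgAn1 : AnalyticOnNhd ℂ (deriv g) Set.univ := hgAn.deriv
  have hgAn2 : AnalyticOnNhd ℂ (deriv (deriv g)) Set.univ := hgAn1.deriv
  have hgd1 : Differentiable ℂ (deriv g) := fun z => (hgAn1 z trivial).differentiableAt
  have hgd2 : Differentiable ℂ (deriv (deriv g)) := fun z => (hgAn2 z trivial).differentiableAt
  have hpow : ∀ s : ℂ, HasDerivAt (fun z : ℂ => z^2) (2*s) s := fun s => by
    simpa using hasDerivAt_pow 2 s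
  -- chain rule identities
  have hg1 : ∀ s : ℂ, HasDerivAt g (2*s*deriv Δa (s^2)) s := fun s => by
    have h := ((hΔent (s^2)).hasDerivAt).comp s (hpow s)
    have e : deriv Δa (s^2) * (2*s) = 2*s*deriv Δa (s^2) := by ring
    rw [e] at h
    exact h
  have hN1 : deriv g = fun s => 2*s*deriv Δa (s^2) := funext fun s => (hg1 s).deriv
  have hg2 : ∀ s : ℂ, HasDerivAt (fun s => 2*s*deriv Δa (s^2))
      (2*deriv Δa (s^2) + 4*s^2*deriv (deriv Δa) (s^2)) s := fun s => by
    have hc : HasDerivAt (fun z : ℂ => deriv Δa (z^2)) (deriv (deriv Δa) (s^2) * (2*s)) s :=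
      by have h := ((hd1 (s^2)).hasDerivAt).comp s (hpow s); exact h
    have hl : HasDerivAt (fun z : ℂ => 2*z) 2 s := by
      simpa using (hasDerivAt_id s).const_mul (2:ℂ)
    have h := hl.mul hc
    have e : 2 * deriv Δa (s^2) + 2*s * (deriv (deriv Δa) (s^2) * (2*s))
        = 2*deriv Δa (s^2) + 4*s^2*deriv (deriv Δa) (s^2) := by ring
    rw [e] at h
    exact h
  have hN2 : deriv (deriv g) = fun s => 2*deriv Δa (s^2) + 4*s^2*deriv (deriv Δa) (s^2) := by
    rw [hN1]; exact funext fun s => (hg2 s).deriv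
  have hg3 : ∀ s : ℂ, HasDerivAt (fun s => 2*deriv Δa (s^2) + 4*s^2*deriv (deriv Δa) (s^2))
      (12*s*deriv (deriv Δa) (s^2) + 8*s^3*deriv (deriv (deriv Δa)) (s^2)) s := fun s => by
    have hc1 : HasDerivAt (fun z : ℂ => deriv Δa (z^2)) (deriv (deriv Δa) (s^2) * (2*s)) s :=
      by have h := ((hd1 (s^2)).hasDerivAt).comp s (hpow s); exact h
    have hc2 : HasDerivAt (fun z : ℂ => deriv (deriv Δa) (z^2))
        (deriv (deriv (deriv Δa)) (s^2) * (2*s)) s :=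
      by have h := ((hd2 (s^2)).hasDerivAt).comp s (hpow s); exact h
    have hq : HasDerivAt (fun z : ℂ => 4*z^2) (4*(2*s)) s := by
      simpa using (hpow s).const_mul (4:ℂ)
    have h := (hc1.const_mul (2:ℂ)).add (hq.mul hc2)
    have e : 2 * (deriv (deriv Δa) (s^2) * (2*s)) + (4*(2*s) * deriv (deriv Δa) (s^2)
        + 4*s^2 * (deriv (deriv (deriv Δa)) (s^2) * (2*s)))
        = 12*s*deriv (deriv Δa) (s^2) + 8*s^3*deriv (deriv (deriv Δa)) (s^2) := by ring
    rw [e] at h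
    exact h
  have hN3 : ∀ s : ℂ, deriv (deriv (deriv g)) s
      = 12*s*deriv (deriv Δa) (s^2) + 8*s^3*deriv (deriv (deriv Δa)) (s^2) := fun s => by
    rw [hN2]; exact (hg3 s).deriv
  -- key identity  s * g s = sin s - sin(a s) - sin((1-a) s)
  have hkey : (fun s : ℂ => s * g s)
      = (fun s : ℂ => Complex.sin s - Complex.sin ((a:ℂ)*s) - Complex.sin ((1-(a:ℂ))*s)) := by
    funext s
    by_cases hs : s = 0
    · subst hs; simp
    · have h2 := hΔval (s^2) (pow_ne_zero 2 hs) s rfl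
      have hgs : g s = -(4/s) * Complex.sin (s*(1-(a:ℂ))/2) * Complex.sin (s*(a:ℂ)/2)
          * Complex.sin (s/2) := h2
      rw [hgs, trigkey (a:ℂ) s]
      field_simp
  -- first transported derivative identity
  have E1 : ∀ s : ℂ, g s + s * deriv g s
      = Complex.cos s - (a:ℂ)*Complex.cos ((a:ℂ)*s) - (1-(a:ℂ))*Complex.cos ((1-(a:ℂ))*s) := by
    intro s
    have L : HasDerivAt (fun s : ℂ => s * g s) (g s + s * deriv g s) s :=
      hasDerivAt_id_mul g (deriv g s) s (hgdiff s).hasDerivAt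
    have R : HasDerivAt (fun s : ℂ => Complex.sin s - Complex.sin ((a:ℂ)*s)
        - Complex.sin ((1-(a:ℂ))*s))
        (Complex.cos s - (a:ℂ)*Complex.cos ((a:ℂ)*s) - (1-(a:ℂ))*Complex.cos ((1-(a:ℂ))*s)) s :=
      ((Complex.hasDerivAt_sin s).sub (hasDerivAt_sin_mul (a:ℂ) s)).sub
        (hasDerivAt_sin_mul (1-(a:ℂ)) s)
    have hLd := L.deriv
    rw [hkey] at hLd
    rw [← hLd]
    exact R.deriv
  have F1 : (fun s : ℂ => g s + s * deriv g s)
      = (fun s : ℂ => Complex.cos s - (a:ℂ)*Complex.cos ((a:ℂ)*s)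
          - (1-(a:ℂ))*Complex.cos ((1-(a:ℂ))*s)) := funext E1
  have E2 : ∀ s : ℂ, 2 * deriv g s + s * deriv (deriv g) s
      = -Complex.sin s + (a:ℂ)^2*Complex.sin ((a:ℂ)*s)
        + (1-(a:ℂ))^2*Complex.sin ((1-(a:ℂ))*s) := by
    intro s
    have L : HasDerivAt (fun s : ℂ => g s + s * deriv g s)
        (2 * deriv g s + s * deriv (deriv g) s) s := by
      have h := ((hgdiff s).hasDerivAt).add
        (hasDerivAt_id_mul (deriv g) (deriv (deriv g) s) s (hgd1 s).hasDerivAt)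
      have e : deriv g s + (deriv g s + s * deriv (deriv g) s)
          = 2 * deriv g s + s * deriv (deriv g) s := by ring
      rw [e] at h
      exact h
    have R : HasDerivAt (fun s : ℂ => Complex.cos s - (a:ℂ)*Complex.cos ((a:ℂ)*s)
        - (1-(a:ℂ))*Complex.cos ((1-(a:ℂ))*s))
        (-Complex.sin s + (a:ℂ)^2*Complex.sin ((a:ℂ)*s)
          + (1-(a:ℂ))^2*Complex.sin ((1-(a:ℂ))*s)) s := by
      have h := ((Complex.hasDerivAt_cos s).sub ((hasDerivAt_cos_mul (a:ℂ) s).const_mul (a:ℂ))).sub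
        ((hasDerivAt_cos_mul (1-(a:ℂ)) s).const_mul (1-(a:ℂ)))
      have e : -Complex.sin s - (a:ℂ) * -((a:ℂ) * Complex.sin ((a:ℂ)*s))
          - (1-(a:ℂ)) * -((1-(a:ℂ)) * Complex.sin ((1-(a:ℂ))*s))
          = -Complex.sin s + (a:ℂ)^2*Complex.sin ((a:ℂ)*s)
            + (1-(a:ℂ))^2*Complex.sin ((1-(a:ℂ))*s) := by ring
      rw [e] at h
      exact h
    have hLd := L.deriv
    rw [F1] at hLd
    rw [← hLd]
    exact R.deriv
  have F2 : (fun s : ℂ => 2 * deriv g s + s * deriv (deriv g) s)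
      = (fun s : ℂ => -Complex.sin s + (a:ℂ)^2*Complex.sin ((a:ℂ)*s)
          + (1-(a:ℂ))^2*Complex.sin ((1-(a:ℂ))*s)) := funext E2
  have E3 : ∀ s : ℂ, 3 * deriv (deriv g) s + s * deriv (deriv (deriv g)) s
      = -Complex.cos s + (a:ℂ)^3*Complex.cos ((a:ℂ)*s)
        + (1-(a:ℂ))^3*Complex.cos ((1-(a:ℂ))*s) := by
    intro s
    have L : HasDerivAt (fun s : ℂ => 2 * deriv g s + s * deriv (deriv g) s)
        (3 * deriv (deriv g) s + s * deriv (deriv (deriv g)) s) s := by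
      have h := (((hgd1 s).hasDerivAt).const_mul (2:ℂ)).add
        (hasDerivAt_id_mul (deriv (deriv g)) (deriv (deriv (deriv g)) s) s (hgd2 s).hasDerivAt)
      have e : 2 * deriv (deriv g) s + (deriv (deriv g) s + s * deriv (deriv (deriv g)) s)
          = 3 * deriv (deriv g) s + s * deriv (deriv (deriv g)) s := by ring
      rw [e] at h
      exact h
    have R : HasDerivAt (fun s : ℂ => -Complex.sin s + (a:ℂ)^2*Complex.sin ((a:ℂ)*s)
        + (1-(a:ℂ))^2*Complex.sin ((1-(a:ℂ))*s))
        (-Complex.cos s + (a:ℂ)^3*Complex.cos ((a:ℂ)*s)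
          + (1-(a:ℂ))^3*Complex.cos ((1-(a:ℂ))*s)) s := by
      have h := (((Complex.hasDerivAt_sin s).neg).add
        ((hasDerivAt_sin_mul (a:ℂ) s).const_mul ((a:ℂ)^2))).add
        ((hasDerivAt_sin_mul (1-(a:ℂ)) s).const_mul ((1-(a:ℂ))^2))
      have e : -Complex.cos s + (a:ℂ)^2 * ((a:ℂ) * Complex.cos ((a:ℂ)*s))
          + (1-(a:ℂ))^2 * ((1-(a:ℂ)) * Complex.cos ((1-(a:ℂ))*s))
          = -Complex.cos s + (a:ℂ)^3*Complex.cos ((a:ℂ)*s)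
            + (1-(a:ℂ))^3*Complex.cos ((1-(a:ℂ))*s) := by ring
      rw [e] at h
      exact h
    have hLd := L.deriv
    rw [F2] at hLd
    rw [← hLd]
    exact R.deriv
  have i2 : iteratedDeriv 2 Δa = deriv (deriv Δa) := by
    rw [show (2:ℕ) = 1 + 1 from rfl, iteratedDeriv_succ, iteratedDeriv_one]
  have i3 : iteratedDeriv 3 Δa = deriv (deriv (deriv Δa)) := by
    rw [show (3:ℕ) = 2 + 1 from rfl, iteratedDeriv_succ, i2]
  constructor
  · intro lamh hne hz hz1
    obtain ⟨sh, hsh⟩ : ∃ z : ℂ, z^2 = lamh := IsAlgClosed.exists_pow_nat_eq lamh zero_lt_two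
    have hshne : sh ≠ 0 := by
      rintro rfl; exact hne (by simpa using hsh.symm)
    have hg0 : g sh = 0 := by rw [hgdef]; simp only; rw [hsh]; exact hz
    have hgd0 : deriv g sh = 0 := by
      rw [hN1]; simp only; rw [hsh, hz1, mul_zero]
    have hprod : Complex.sin (sh*(1-(a:ℂ))/2) * Complex.sin (sh*(a:ℂ)/2)
        * Complex.sin (sh/2) = 0 := by
      have h := hΔval lamh hne sh hsh
      rw [hz] at h
      have h4 : (-(4/sh) : ℂ) ≠ 0 := by
        simp [hshne]
      have h' : (-(4/sh) : ℂ) * (Complex.sin (sh*(1-(a:ℂ))/2) * Complex.sin (sh*(a:ℂ)/2)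
          * Complex.sin (sh/2)) = 0 := by linear_combination -h
      exact (mul_eq_zero.mp h').resolve_left h4
    have hcond1 : Complex.cos sh - (a:ℂ)*Complex.cos ((a:ℂ)*sh)
        - (1-(a:ℂ))*Complex.cos ((1-(a:ℂ))*sh) = 0 := by
      have h := E1 sh
      rw [hg0, hgd0] at h
      simpa using h.symm
    obtain ⟨hsa, hsb, hss, hca, hcb, hcs⟩ := aux2 (a:ℂ) sh hA0 hA1 hprod hcond1
    -- second derivative of g vanishes at sh
    have hE2 := E2 sh
    rw [hgd0, hss, hsa, hsb] at hE2
    have hD2g : deriv (deriv g) sh = 0 := by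
      have h : sh * deriv (deriv g) sh = 0 := by linear_combination hE2
      exact (mul_eq_zero.mp h).resolve_left hshne
    -- second derivative of Δa vanishes at lamh
    have hN2sh := congrFun hN2 sh
    rw [hsh, hD2g, hz1] at hN2sh
    have hD2 : deriv (deriv Δa) lamh = 0 := by
      have h : (4*lamh) * deriv (deriv Δa) lamh = 0 := by linear_combination -hN2sh
      exact (mul_eq_zero.mp h).resolve_left (by simp [hne])
    -- third derivative
    have hE3 := E3 sh
    rw [hD2g, hcs, hca, hcb] at hE3
    have hN3sh := hN3 sh
    rw [hsh, hD2] at hN3sh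
    have hsh4 : sh^4 = lamh^2 := by rw [← hsh]; ring
    have hD3 : deriv (deriv (deriv Δa)) lamh = 3 * ((a:ℂ)^2 - (a:ℂ)) / (8 * lamh^2) := by
      have h8 : (8 * lamh^2 : ℂ) ≠ 0 := by simp [hne]
      rw [hN3sh] at hE3
      rw [eq_div_iff h8]
      linear_combination hE3 - 8 * deriv (deriv (deriv Δa)) lamh * hsh4
    refine ⟨by rw [i2]; exact hD2, by rw [i3]; exact hD3, ?_⟩
    rw [i3, hD3]
    have hnum : 3 * ((a:ℂ)^2 - (a:ℂ)) ≠ 0 := by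
      have : (a:ℂ)^2 - (a:ℂ) = (a:ℂ) * ((a:ℂ) - 1) := by ring
      rw [this]
      exact mul_ne_zero three_ne_zero (mul_ne_zero hA0 hAm1)
    exact div_ne_zero hnum (by simp [hne])
  · -- values at 0
    have hE10 := E1 0
    simp only [mul_zero, zero_mul, add_zero, Complex.cos_zero] at hE10
    -- hE10 : g 0 = 1 - a*1 - (1-a)*1
    have hg00 : g 0 = 0 := by rw [hE10]; ring
    have hΔ0 : Δa 0 = 0 := by
      have : Δa 0 = g 0 := by rw [hgdef]; norm_num
      rw [this, hg00]
    have hE30 := E3 0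
    simp only [mul_zero, zero_mul, add_zero, Complex.cos_zero] at hE30
    -- hE30 : 3 * deriv (deriv g) 0 = -1 + a^3*1 + (1-a)^3*1
    have hN20 := congrFun hN2 0
    simp only [ne_eq, OfNat.ofNat_ne_zero, not_false_eq_true, zero_pow, mul_zero,
      zero_mul, add_zero] at hN20
    -- hN20 : deriv (deriv g) 0 = 2 * deriv Δa (0^2) (zero_pow should make 0^2 = 0)
    have hd10 : deriv Δa 0 = (a:ℂ) * ((a:ℂ) - 1) / 2 := by
      have h1 : 3 * (2 * deriv Δa 0) = -1 + (a:ℂ)^3*1 + (1-(a:ℂ))^3*1 := by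
        rw [← hN20]; exact hE30
      linear_combination h1 / 6
    refine ⟨hΔ0, hd10, ?_⟩
    rw [hd10]
    intro h
    have h2 : (a:ℂ) * ((a:ℂ) - 1) = 0 := by
      field_simp at h
      try exact h
      try linear_combination h
    exact (mul_ne_zero hA0 hAm1) h2
end
end

section
/- Fix a ∈ (0,1). The entire function Δ_a has a zero of order at least 2 (i.e., there exists λ̂ ∈ ℂ with Δ_a(λ̂) = 0 and Δ_a'(λ̂) = 0) if and only if a is rational. -/
open Set

noncomputable section

open Filter Topology

lemma coreD (c₁ c₂ c₃ lam s0 : ℂ) (hl : lam ≠ 0) (hs : s0 ^ 2 = lam) (Δ : ℂ → ℂ)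
    (heval : ∀ μ : ℂ, μ ≠ 0 → ∀ s : ℂ, s ^ 2 = μ →
      Δ μ = -(4 / s) * Complex.sin (s * c₁) * Complex.sin (s * c₂) * Complex.sin (s * c₃)) :
    ∃ h : ℂ, h ≠ 0 ∧ deriv Δ lam =
      ((-(4 * (-h / s0 ^ 2)) * Complex.sin (s0 * c₁)
          + -(4 * s0⁻¹) * (Complex.cos (s0 * c₁) * (h * c₁))) * Complex.sin (s0 * c₂)
        + -(4 * s0⁻¹) * Complex.sin (s0 * c₁) * (Complex.cos (s0 * c₂) * (h * c₂))) * Complex.sin (s0 * c₃)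
      + -(4 * s0⁻¹) * Complex.sin (s0 * c₁) * Complex.sin (s0 * c₂) * (Complex.cos (s0 * c₃) * (h * c₃)) := by
  have hs0 : s0 ≠ 0 := by
    intro h; rw [h] at hs; simp at hs; exact hl hs.symm
  set f : ℂ → ℂ := fun μ => s0 * Complex.exp (Complex.log (μ / lam) / 2) with hf_def
  have hflam : f lam = s0 := by
    simp [hf_def, div_self hl, Complex.log_one]
  -- derivative of f
  have hlog : HasDerivAt (fun μ : ℂ => Complex.log (μ / lam)) lam⁻¹ lam := by
    have h1 : HasDerivAt (fun μ : ℂ => μ / lam) lam⁻¹ lam := by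
      simpa using (hasDerivAt_id lam).div_const lam
    have h2 : HasDerivAt Complex.log (lam / lam)⁻¹ (lam / lam) := by
      apply Complex.hasDerivAt_log
      rw [div_self hl]
      exact Complex.mem_slitPlane_iff.mpr (Or.inl (by norm_num))
    have := HasDerivAt.comp (h := fun μ : ℂ => μ / lam) lam h2 h1
    rw [div_self hl] at this
    simpa [Function.comp_def] using this
  have hf : HasDerivAt f (s0 * lam⁻¹ / 2) lam := by
    have h3 : HasDerivAt (fun μ : ℂ => Complex.log (μ / lam) / 2) (lam⁻¹ / 2) lam :=
      hlog.div_const 2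
    have h4 : HasDerivAt (fun μ : ℂ => Complex.exp (Complex.log (μ / lam) / 2))
        (Complex.exp (Complex.log (lam / lam) / 2) * (lam⁻¹ / 2)) lam :=
      (Complex.hasDerivAt_exp _).comp lam h3
    rw [div_self hl, Complex.log_one] at h4
    simp only [zero_div, Complex.exp_zero, one_mul] at h4
    have := h4.const_mul s0
    simpa [mul_div_assoc] using this
  set h : ℂ := s0 * lam⁻¹ / 2 with hh_def
  have hhne : h ≠ 0 := by
    simp [hh_def]
    exact ⟨hs0, hl⟩
  -- eventual equality
  have hU : ∀ᶠ μ in 𝓝 lam, μ / lam ∈ Complex.slitPlane := by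
    have : ContinuousAt (fun μ : ℂ => μ / lam) lam := (continuousAt_id).div_const lam
    apply this.eventually_mem (Complex.isOpen_slitPlane.mem_nhds ?_)
    rw [div_self hl]
    exact Complex.mem_slitPlane_iff.mpr (Or.inl (by norm_num))
  have hsq : ∀ μ : ℂ, μ / lam ∈ Complex.slitPlane → μ ≠ 0 ∧ (f μ) ^ 2 = μ := by
    intro μ hμ
    have hν : μ / lam ≠ 0 := Complex.slitPlane_ne_zero hμ
    have hμ0 : μ ≠ 0 := fun h0 => hν (by simp [h0])
    refine ⟨hμ0, ?_⟩
    have : Complex.exp (Complex.log (μ / lam) / 2) ^ 2 = μ / lam := by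
      rw [← Complex.exp_nat_mul]
      push_cast
      rw [show (2:ℂ) * (Complex.log (μ / lam) / 2) = Complex.log (μ / lam) by ring]
      exact Complex.exp_log hν
    calc (f μ) ^ 2 = s0 ^ 2 * Complex.exp (Complex.log (μ / lam) / 2) ^ 2 := by
          rw [hf_def]; ring
      _ = lam * (μ / lam) := by rw [hs, this]
      _ = μ := by field_simp
  have heq : Δ =ᶠ[𝓝 lam] fun μ =>
      -(4 * (f μ)⁻¹) * Complex.sin (f μ * c₁) * Complex.sin (f μ * c₂) * Complex.sin (f μ * c₃) := by
    filter_upwards [hU] with μ hμ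
    obtain ⟨hμ0, hfμ⟩ := hsq μ hμ
    rw [heval μ hμ0 (f μ) hfμ]
    ring
  -- derivatives of components
  have hne : f lam ≠ 0 := by rw [hflam]; exact hs0
  have hu : HasDerivAt (fun μ => -(4 * (f μ)⁻¹)) (-(4 * (-h / s0 ^ 2))) lam := by
    have := ((hf.inv hne).const_mul (4:ℂ)).neg
    rw [hflam] at this
    exact this
  have hA : ∀ c : ℂ, HasDerivAt (fun μ => Complex.sin (f μ * c))
      (Complex.cos (s0 * c) * (h * c)) lam := by
    intro c
    have := (Complex.hasDerivAt_sin (f lam * c)).comp lam (hf.mul_const c)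
    rw [hflam] at this
    exact this
  have hg := ((hu.mul (hA c₁)).mul (hA c₂)).mul (hA c₃)
  refine ⟨h, hhne, ?_⟩
  have hd := hg.deriv
  simp only [hflam, Pi.mul_def] at hd
  exact heq.deriv_eq.trans hd

lemma lemZ (c₁ c₂ c₃ lam s0 : ℂ) (hl : lam ≠ 0) (hs : s0 ^ 2 = lam) (Δ : ℂ → ℂ)
    (heval : ∀ μ : ℂ, μ ≠ 0 → ∀ s : ℂ, s ^ 2 = μ →
      Δ μ = -(4 / s) * Complex.sin (s * c₁) * Complex.sin (s * c₂) * Complex.sin (s * c₃))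
    (h2 : Complex.sin (s0 * c₂) = 0) (h3 : Complex.sin (s0 * c₃) = 0) :
    deriv Δ lam = 0 := by
  obtain ⟨h, -, hd⟩ := coreD c₁ c₂ c₃ lam s0 hl hs Δ heval
  rw [hd, h2, h3]; ring

lemma lemN (c₁ c₂ c₃ lam s0 : ℂ) (hl : lam ≠ 0) (hs : s0 ^ 2 = lam) (Δ : ℂ → ℂ)
    (heval : ∀ μ : ℂ, μ ≠ 0 → ∀ s : ℂ, s ^ 2 = μ →
      Δ μ = -(4 / s) * Complex.sin (s * c₁) * Complex.sin (s * c₂) * Complex.sin (s * c₃))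
    (h1 : Complex.sin (s0 * c₁) ≠ 0) (h2 : Complex.sin (s0 * c₂) = 0)
    (h3 : Complex.sin (s0 * c₃) ≠ 0) (hc : c₂ ≠ 0) :
    deriv Δ lam ≠ 0 := by
  obtain ⟨h, hh, hd⟩ := coreD c₁ c₂ c₃ lam s0 hl hs Δ heval
  have hs0 : s0 ≠ 0 := by
    intro h0; rw [h0] at hs; simp at hs; exact hl hs.symm
  have hcos : Complex.cos (s0 * c₂) ≠ 0 := by
    intro hc0
    have := Complex.sin_sq_add_cos_sq (s0 * c₂)
    rw [h2, hc0] at this; simp at this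
  rw [hd, h2]
  simp only [mul_zero, zero_mul, add_zero, zero_add]
  exact mul_ne_zero (mul_ne_zero (mul_ne_zero (by simp [hs0]) h1)
    (mul_ne_zero hcos (mul_ne_zero hh hc))) h3

lemma limsin (c : ℂ) :
    Filter.Tendsto (fun t : ℂ => Complex.sin (t * c) / t) (𝓝[≠] (0:ℂ)) (𝓝 c) := by
  have hder : HasDerivAt (fun t : ℂ => Complex.sin (t * c)) c 0 := by
    have := (Complex.hasDerivAt_sin ((0:ℂ) * c)).comp (0:ℂ) ((hasDerivAt_id (0:ℂ)).mul_const c)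
    simpa [Function.comp_def] using this
  have := hasDerivAt_iff_tendsto_slope.mp hder
  apply this.congr
  intro t
  simp [slope_def_field]

lemma derivZero (a : ℝ) (ha : a ∈ Set.Ioo (0:ℝ) 1) (Δ : ℂ → ℂ) (hΔent : Differentiable ℂ Δ)
    (hΔval : ∀ lam : ℂ, lam ≠ 0 → ∀ s : ℂ, s ^ 2 = lam →
      Δ lam = -(4 / s) * Complex.sin (s * (1 - (a : ℂ)) / 2) *
        Complex.sin (s * (a : ℂ) / 2) * Complex.sin (s / 2))
    (h0 : Δ 0 = 0) : deriv Δ 0 ≠ 0 := by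
  have hdd : HasDerivAt Δ (deriv Δ 0) 0 := (hΔent 0).hasDerivAt
  have htends := hasDerivAt_iff_tendsto_slope.mp hdd
  have hsq : Filter.Tendsto (fun t : ℂ => t ^ 2) (𝓝[≠] (0:ℂ)) (𝓝[≠] (0:ℂ)) := by
    rw [tendsto_nhdsWithin_iff]
    constructor
    · have : Filter.Tendsto (fun t : ℂ => t ^ 2) (𝓝 (0:ℂ)) (𝓝 ((0:ℂ) ^ 2)) :=
        (continuous_pow 2).tendsto (0:ℂ)
      simpa using this.mono_left nhdsWithin_le_nhds
    · filter_upwards [self_mem_nhdsWithin] with t ht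
      exact pow_ne_zero 2 ht
  have hcomp := htends.comp hsq
  have hcong : ∀ᶠ t in 𝓝[≠] (0:ℂ), (slope Δ 0 ∘ fun t => t ^ 2) t =
      -4 * (Complex.sin (t * ((1 - (a:ℂ)) / 2)) / t * (Complex.sin (t * ((a:ℂ) / 2)) / t *
        (Complex.sin (t * (2⁻¹ : ℂ)) / t))) := by
    filter_upwards [self_mem_nhdsWithin] with t ht
    have ht2 : (t:ℂ) ^ 2 ≠ 0 := pow_ne_zero 2 ht
    simp only [Function.comp, slope_def_field, h0, sub_zero]
    rw [hΔval (t ^ 2) ht2 t rfl]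
    rw [mul_div_assoc t (1 - (a:ℂ)) 2, mul_div_assoc t (a:ℂ) 2,
      show t / 2 = t * (2⁻¹ : ℂ) by ring]
    field_simp
  have hL : Filter.Tendsto (fun t : ℂ =>
      -4 * (Complex.sin (t * ((1 - (a:ℂ)) / 2)) / t * (Complex.sin (t * ((a:ℂ) / 2)) / t *
        (Complex.sin (t * (2⁻¹ : ℂ)) / t)))) (𝓝[≠] (0:ℂ))
      (𝓝 (-4 * ((1 - (a:ℂ)) / 2 * ((a:ℂ) / 2 * (2⁻¹ : ℂ))))) :=
    (((limsin _).mul ((limsin _).mul (limsin _)))).const_mul (-4)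
  have huniq : deriv Δ 0 = -4 * ((1 - (a:ℂ)) / 2 * ((a:ℂ) / 2 * (2⁻¹ : ℂ))) :=
    tendsto_nhds_unique (hcomp.congr' hcong) hL
  rw [huniq]
  have ha0 : (a:ℂ) ≠ 0 := Complex.ofReal_ne_zero.mpr (ne_of_gt ha.1)
  have ha1 : (1:ℂ) - (a:ℂ) ≠ 0 := by
    rw [show (1:ℂ) - a = ((1 - a : ℝ) : ℂ) by push_cast; ring]
    exact Complex.ofReal_ne_zero.mpr (by linarith [ha.2])
  intro hcon
  apply ha0
  have := mul_eq_zero.mp hcon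
  rcases this with h | h
  · norm_num at h
  · rcases mul_eq_zero.mp h with h' | h'
    · exact absurd ((div_eq_zero_iff.mp h').resolve_right (by norm_num)) ha1
    · rcases mul_eq_zero.mp h' with h'' | h''
      · exact (div_eq_zero_iff.mp h'').resolve_right (by norm_num)
      · norm_num at h''

theorem stmt12 (a : ℝ) (ha : a ∈ Ioo (0:ℝ) 1)
    (Δa : ℂ → ℂ) (hΔent : Differentiable ℂ Δa)
    (hΔval : ∀ lam : ℂ, lam ≠ 0 → ∀ s : ℂ, s ^ 2 = lam →
      Δa lam = -(4 / s) * Complex.sin (s * (1 - (a : ℂ)) / 2) *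
        Complex.sin (s * (a : ℂ) / 2) * Complex.sin (s / 2)) :
    (∃ lamh : ℂ, Δa lamh = 0 ∧ deriv Δa lamh = 0) ↔ ∃ q : ℚ, (q : ℝ) = a := by
  have hπ : ((Real.pi : ℝ) : ℂ) ≠ 0 := Complex.ofReal_ne_zero.mpr Real.pi_ne_zero
  have ha0 : (a:ℂ) ≠ 0 := Complex.ofReal_ne_zero.mpr (ne_of_gt ha.1)
  have ha1 : (1:ℂ) - (a:ℂ) ≠ 0 := by
    rw [show (1:ℂ) - a = ((1 - a : ℝ) : ℂ) by push_cast; ring]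
    exact Complex.ofReal_ne_zero.mpr (by linarith [ha.2])
  have hc1 : ((1 - (a:ℂ)) / 2) ≠ 0 := div_ne_zero ha1 two_ne_zero
  have hc2 : ((a:ℂ) / 2) ≠ 0 := div_ne_zero ha0 two_ne_zero
  have hc3 : ((2⁻¹ : ℂ)) ≠ 0 := by norm_num
  have heval : ∀ μ : ℂ, μ ≠ 0 → ∀ s : ℂ, s ^ 2 = μ →
      Δa μ = -(4 / s) * Complex.sin (s * ((1 - (a:ℂ)) / 2)) *
        Complex.sin (s * ((a:ℂ) / 2)) * Complex.sin (s * (2⁻¹:ℂ)) := by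
    intro μ hμ s hsμ
    rw [hΔval μ hμ s hsμ, mul_div_assoc, mul_div_assoc,
      show s / 2 = s * (2⁻¹:ℂ) from by ring]
  constructor
  · rintro ⟨lamh, h0, h1⟩
    by_cases hl : lamh = 0
    · subst hl
      exact absurd h1 (derivZero a ha Δa hΔent hΔval h0)
    set s0 : ℂ := Complex.exp (Complex.log lamh / 2) with hs0def
    have hs : s0 ^ 2 = lamh := by
      rw [sq, ← Complex.exp_add,
        show Complex.log lamh / 2 + Complex.log lamh / 2 = Complex.log lamh by ring]
      exact Complex.exp_log hl
    have hs0 : s0 ≠ 0 := Complex.exp_ne_zero _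
    have heval213 : ∀ μ : ℂ, μ ≠ 0 → ∀ s : ℂ, s ^ 2 = μ →
        Δa μ = -(4 / s) * Complex.sin (s * ((a:ℂ) / 2)) *
          Complex.sin (s * ((1 - (a:ℂ)) / 2)) * Complex.sin (s * (2⁻¹:ℂ)) := by
      intro μ hμ s hsμ; rw [heval μ hμ s hsμ]; ring
    have heval132 : ∀ μ : ℂ, μ ≠ 0 → ∀ s : ℂ, s ^ 2 = μ →
        Δa μ = -(4 / s) * Complex.sin (s * ((1 - (a:ℂ)) / 2)) *
          Complex.sin (s * (2⁻¹:ℂ)) * Complex.sin (s * ((a:ℂ) / 2)) := by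
      intro μ hμ s hsμ; rw [heval μ hμ s hsμ]; ring
    have hprod : Complex.sin (s0 * ((1 - (a:ℂ)) / 2)) = 0 ∨
        Complex.sin (s0 * ((a:ℂ) / 2)) = 0 ∨ Complex.sin (s0 * (2⁻¹:ℂ)) = 0 := by
      have hev := heval lamh hl s0 hs
      rw [h0] at hev
      have h40 : -(4 / s0) ≠ 0 := neg_ne_zero.mpr (div_ne_zero (by norm_num) hs0)
      rcases mul_eq_zero.mp hev.symm with h | h
      · rcases mul_eq_zero.mp h with h' | h'
        · rcases mul_eq_zero.mp h' with h'' | h''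
          · exact absurd h'' h40
          · exact Or.inl h''
        · exact Or.inr (Or.inl h')
      · exact Or.inr (Or.inr h)
    have hBC : Complex.sin (s0 * ((a:ℂ)/2)) = 0 ∧ Complex.sin (s0 * (2⁻¹:ℂ)) = 0 := by
      by_cases hA : Complex.sin (s0 * ((1 - (a:ℂ))/2)) = 0
      · by_cases hB : Complex.sin (s0 * ((a:ℂ)/2)) = 0
        · obtain ⟨m, hm⟩ := Complex.sin_eq_zero_iff.mp hA
          obtain ⟨k, hk⟩ := Complex.sin_eq_zero_iff.mp hB
          exact ⟨hB, Complex.sin_eq_zero_iff.mpr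
            ⟨m + k, by push_cast; linear_combination hm + hk⟩⟩
        · by_cases hC : Complex.sin (s0 * (2⁻¹:ℂ)) = 0
          · obtain ⟨m, hm⟩ := Complex.sin_eq_zero_iff.mp hA
            obtain ⟨n, hn⟩ := Complex.sin_eq_zero_iff.mp hC
            exact ⟨Complex.sin_eq_zero_iff.mpr
              ⟨n - m, by push_cast; linear_combination hn - hm⟩, hC⟩
          · exact absurd h1 (lemN ((a:ℂ)/2) ((1 - (a:ℂ))/2) (2⁻¹:ℂ) lamh s0 hl hs Δa
              heval213 hB hA hC hc1)
      · by_cases hB : Complex.sin (s0 * ((a:ℂ)/2)) = 0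
        · by_cases hC : Complex.sin (s0 * (2⁻¹:ℂ)) = 0
          · exact ⟨hB, hC⟩
          · exact absurd h1 (lemN ((1 - (a:ℂ))/2) ((a:ℂ)/2) (2⁻¹:ℂ) lamh s0 hl hs Δa
              heval hA hB hC hc2)
        · by_cases hC : Complex.sin (s0 * (2⁻¹:ℂ)) = 0
          · exact absurd h1 (lemN ((1 - (a:ℂ))/2) (2⁻¹:ℂ) ((a:ℂ)/2) lamh s0 hl hs Δa
              heval132 hA hC hB hc3)
          · rcases hprod with h | h | h
            · exact absurd h hA
            · exact absurd h hB
            · exact absurd h hC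
    obtain ⟨hB, hC⟩ := hBC
    obtain ⟨k, hk⟩ := Complex.sin_eq_zero_iff.mp hB
    obtain ⟨n, hn⟩ := Complex.sin_eq_zero_iff.mp hC
    have hnz : n ≠ 0 := by
      rintro rfl
      apply hs0
      have h' : s0 * 2⁻¹ = 0 := by simpa using hn
      simpa using h'
    have key : (a:ℂ) * ((n:ℂ) * ↑Real.pi) = (k:ℂ) * ↑Real.pi := by
      rw [← hn, ← hk]; ring
    have han : (a:ℂ) * n = k := mul_right_cancel₀ hπ (by rw [mul_assoc]; exact key)
    have hnC : (n:ℂ) ≠ 0 := Int.cast_ne_zero.mpr hnz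
    refine ⟨(k:ℚ)/(n:ℚ), ?_⟩
    have hgoal : (a:ℂ) = (k:ℂ)/(n:ℂ) := by rw [eq_div_iff hnC]; exact han
    apply Complex.ofReal_injective
    push_cast
    exact hgoal.symm
  · rintro ⟨q, hq⟩
    have hdenC : ((q.den : ℂ)) ≠ 0 := Nat.cast_ne_zero.mpr q.den_pos.ne'
    set s0 : ℂ := 2 * (q.den:ℂ) * ↑Real.pi with hs0def
    have hs0 : s0 ≠ 0 := mul_ne_zero (mul_ne_zero two_ne_zero hdenC) hπ
    have hl : s0 ^ 2 ≠ 0 := pow_ne_zero 2 hs0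
    have haC : (a:ℂ) = (q.num:ℂ)/(q.den:ℂ) := by
      rw [← hq]; push_cast [Rat.cast_def]; ring
    have hB : Complex.sin (s0 * ((a:ℂ)/2)) = 0 :=
      Complex.sin_eq_zero_iff.mpr ⟨q.num, by
        rw [haC, hs0def]; field_simp⟩
    have hC : Complex.sin (s0 * (2⁻¹:ℂ)) = 0 :=
      Complex.sin_eq_zero_iff.mpr ⟨(q.den:ℤ), by rw [hs0def]; push_cast; ring⟩
    refine ⟨s0 ^ 2, ?_, ?_⟩
    · rw [heval (s0 ^ 2) hl s0 rfl, hB]; ring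
    · exact lemZ ((1 - (a:ℂ))/2) ((a:ℂ)/2) (2⁻¹:ℂ) (s0 ^ 2) s0 hl rfl Δa heval hB hC
end
end
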